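/- arXiv:1607.05374 — 6 statements merged into one kernel-verified Lean document; each statement's English description precedes it below -/
import Mathlib

section
/- Let n ≥ 3 be an integer and define q(t) = t^{n−2} g(t) / (1−t²)^{n−1} for t ∈ (0,1), where g(t) = (1/n) ∫_t^1 (1−s²)^{n−2} s^{−(n−1)} ds. Then for every t ∈ (0,1), 1/(2n(n−1)) < q(t) < 1/(n(n−2)); equivalently, (1/(2n(n−1))) (1−t²)^{n−1}/t^{n−2} < g(t) < (1/(n(n−2))) (1−t²)^{n−1}/t^{n−2}. -/
open MeasureTheory Metric Set

noncomputable section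

/-- The open unit ball setting: Euclidean n-space. -/
abbrev En (n : ℕ) := EuclideanSpace ℝ (Fin n)

/-- Lebesgue volume measure normalized so that the unit ball has measure 1. -/
def nuMeasure (n : ℕ) : Measure (En n) :=
  (volume (ball (0 : En n) 1))⁻¹ • (volume : Measure (En n))

/-- The Möbius invariant measure `dτ(x) = dν(x)/(1-|x|²)ⁿ`. -/
def tauMeasure (n : ℕ) : Measure (En n) :=
  (nuMeasure n).withDensity fun x => ENNReal.ofReal ((1 - ‖x‖ ^ 2) ^ n)⁻¹

/-- The surface measure on the unit sphere, normalized so that the sphere has measure 1. -/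
def sigmaMeasure (n : ℕ) : Measure (sphere (0 : En n) 1) :=
  ((volume : Measure (En n)).toSphere univ)⁻¹ • (volume : Measure (En n)).toSphere

/-- `[a,x]` via the identity `[a,x]² = |x-a|² + (1-|x|²)(1-|a|²)`. -/
def qbracket {n : ℕ} (a x : En n) : ℝ :=
  Real.sqrt (‖x - a‖ ^ 2 + (1 - ‖x‖ ^ 2) * (1 - ‖a‖ ^ 2))

/-- The Möbius transformation `φ_a` of the unit ball with `φ_a(a) = 0`, `φ_a(0) = a`. -/
def mobius {n : ℕ} (a x : En n) : En n :=
  (qbracket a x ^ 2)⁻¹ • (‖x - a‖ ^ 2 • a - (1 - ‖a‖ ^ 2) • (x - a))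

/-- `g(r) = (1/n) ∫_r^1 (1-s²)^{n-2} s^{-(n-1)} ds`. -/
def gfun (n : ℕ) (r : ℝ) : ℝ :=
  (1 / (n : ℝ)) * ∫ s in r..(1 : ℝ), (1 - s ^ 2) ^ (n - 2) / s ^ (n - 1)

/-- The hyperbolic Green function `G_h(x,y) = g(|φ_x(y)|)`. -/
def Gh (n : ℕ) (x y : En n) : ℝ := gfun n ‖mobius x y‖

/-- The Green integral `G_h[ψ](x) = ∫_{𝔹ⁿ} G_h(x,y) ψ(y) dτ(y)`. -/
def GhInt (n : ℕ) (ψ : En n → En n) (x : En n) : En n :=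
  ∫ y in ball (0 : En n) 1, Gh n x y • ψ y ∂(tauMeasure n)

/-- The Poisson–Szegő kernel `P_h(x,ξ) = ((1-|x|²)/|ξ-x|²)^{n-1}`. -/
def Ph (n : ℕ) (x : En n) (ξ : sphere (0 : En n) 1) : ℝ :=
  ((1 - ‖x‖ ^ 2) / ‖(ξ : En n) - x‖ ^ 2) ^ (n - 1)

/-- The Poisson integral `P_h[φ](x) = ∫_{𝕊ⁿ⁻¹} P_h(x,ξ) φ(ξ) dσ(ξ)`. -/
def PhInt (n : ℕ) (φ : En n → En n) (x : En n) : En n :=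
  ∫ ξ, Ph n x ξ • φ (ξ : En n) ∂(sigmaMeasure n)

/-- The `i`-th standard basis vector. -/
def basisE (n : ℕ) (i : Fin n) : En n := EuclideanSpace.single i 1

/-- The Euclidean Laplacian of a vector-valued function. -/
def lap {n : ℕ} (u : En n → En n) (x : En n) : En n :=
  ∑ i : Fin n, fderiv ℝ (fun y => fderiv ℝ u y (basisE n i)) x (basisE n i)

/-- The hyperbolic Laplacian
`Δ_h u(x) = (1-|x|²)² Δu(x) + 2(n-2)(1-|x|²) Σᵢ xᵢ ∂u/∂xᵢ(x)`. -/
def hypLap (n : ℕ) (u : En n → En n) (x : En n) : En n :=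
  (1 - ‖x‖ ^ 2) ^ 2 • lap u x
    + (2 * ((n : ℝ) - 2) * (1 - ‖x‖ ^ 2)) • ∑ i : Fin n, x i • fderiv ℝ u x (basisE n i)

/-- Pochhammer symbol `(a)_k`. -/
def poch (a : ℝ) (k : ℕ) : ℝ := (ascPochhammer ℝ k).eval a

/-- Gauss hypergeometric series `F(a,b;c;s)`. -/
def hyperF (a b c s : ℝ) : ℝ :=
  ∑' k : ℕ, poch a k * poch b k / ((k.factorial : ℝ) * poch c k) * s ^ k

/-- A majorant: continuous, increasing, `ω(0)=0`, with `ω(t)/t` non-increasing. -/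
def IsMajorant (ω : ℝ → ℝ) : Prop :=
  ContinuousOn ω (Ici 0) ∧ MonotoneOn ω (Ici 0) ∧ ω 0 = 0 ∧
    (∀ x ∈ Ici (0:ℝ), 0 ≤ ω x) ∧
    ∀ s t : ℝ, 0 < s → s ≤ t → ω t / t ≤ ω s / s

/-- A fast majorant: `∫₀^ρ ω(t)/t dt ≤ C ω(ρ)` for small `ρ`. -/
def IsFastMajorant (ω : ℝ → ℝ) : Prop :=
  IsMajorant ω ∧ ∃ ρ₀ > (0:ℝ), ∃ C : ℝ,
    ∀ ρ : ℝ, 0 < ρ → ρ < ρ₀ → (∫ t in (0:ℝ)..ρ, ω t / t) ≤ C * ω ρ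

end

/-- bounds for `q(t) = t^{n-2} g(t)/(1-t²)^{n-1}` on `(0,1)`. -/
theorem stmt_6 (n : ℕ) (hn : 3 ≤ n) (t : ℝ) (ht : t ∈ Ioo (0 : ℝ) 1) :
    (1 / (2 * (n : ℝ) * ((n : ℝ) - 1)) < t ^ (n - 2) * gfun n t / (1 - t ^ 2) ^ (n - 1) ∧
      t ^ (n - 2) * gfun n t / (1 - t ^ 2) ^ (n - 1) < 1 / ((n : ℝ) * ((n : ℝ) - 2))) ∧
    (1 / (2 * (n : ℝ) * ((n : ℝ) - 1)) * ((1 - t ^ 2) ^ (n - 1) / t ^ (n - 2)) < gfun n t ∧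
      gfun n t < 1 / ((n : ℝ) * ((n : ℝ) - 2)) * ((1 - t ^ 2) ^ (n - 1) / t ^ (n - 2))) := by
  obtain ⟨ht0, ht1⟩ := ht
  obtain ⟨m, rfl⟩ : ∃ m, n = m + 3 := ⟨n - 3, by omega⟩
  clear hn
  have hT : (0:ℝ) < t ^ (m+1) := by positivity
  have ht2 : (0:ℝ) < 1 - t ^ 2 := by nlinarith
  have hS : (0:ℝ) < (1 - t ^ 2) ^ (m+2) := by positivity
  set h : ℝ → ℝ := fun s => (1 - s^2)^(m+1) / s^(m+2) with hh
  have hne : ∀ s ∈ Icc t 1, s ≠ 0 := fun s hs => by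
    have := hs.1; intro h0; rw [h0] at this; linarith
  have hcont : ContinuousOn h (Icc t 1) :=
    ContinuousOn.div (by fun_prop) (by fun_prop)
      (fun s hs => pow_ne_zero _ (hne s hs))
  have huIcc : uIcc t 1 = Icc t 1 := uIcc_of_le ht1.le
  have hint : IntervalIntegrable h volume t 1 := by
    rw [intervalIntegrable_iff_integrableOn_Icc_of_le ht1.le]
    exact hcont.integrableOn_compact isCompact_Icc
  have hcontq : ∀ c d : ℝ, ContinuousOn (fun s => (c + d * s^2) * h s) (Icc t 1) :=
    fun c d => ContinuousOn.mul (by fun_prop) hcont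
  have hintq : ∀ c d : ℝ, IntervalIntegrable (fun s => (c + d * s^2) * h s) volume t 1 := by
    intro c d
    rw [intervalIntegrable_iff_integrableOn_Icc_of_le ht1.le]
    exact (hcontq c d).integrableOn_compact isCompact_Icc
  -- FTC computation
  have hFTC : ∫ s in t..1, (((m:ℝ)+1) + ((m:ℝ)+3) * s^2) * h s
      = (1 - t^2)^(m+2) / t^(m+1) := by
    have key : ∀ s ∈ uIcc t 1,
        HasDerivAt (fun s : ℝ => -((1 - s^2)^(m+2) / s^(m+1)))
          ((((m:ℝ)+1) + ((m:ℝ)+3) * s^2) * h s) s := by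
      intro s hs
      rw [huIcc] at hs
      have hs0 : s ≠ 0 := hne s hs
      have h1 : HasDerivAt (fun s : ℝ => 1 - s^2) (-(2*s)) s := by
        simpa using ((hasDerivAt_pow 2 s).const_sub 1)
      have h2 : HasDerivAt (fun s : ℝ => (1 - s^2)^(m+2))
          (((m:ℝ)+2) * (1 - s^2)^(m+1) * -(2*s)) s := by
        have := h1.fun_pow (m+2)
        simpa using this
      have h3 : HasDerivAt (fun s : ℝ => s^(m+1)) (((m:ℝ)+1) * s^m) s := by
        simpa using hasDerivAt_pow (m+1) s
      have h4 := (h2.fun_div h3 (pow_ne_zero _ hs0)).fun_neg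
      refine h4.congr_deriv ?_
      simp only [hh]
      field_simp
      ring
    rw [intervalIntegral.integral_eq_sub_of_hasDerivAt key (hintq _ _)]
    norm_num
  have hposIoo : ∀ s ∈ Ioo t 1, 0 < h s := by
    intro s hs
    have h1 : 0 < s := lt_trans ht0 hs.1
    have h2 : 0 < 1 - s^2 := by nlinarith [hs.2]
    simp only [hh]
    positivity
  set I : ℝ := ∫ s in t..1, h s with hI
  have hintc : ∀ c : ℝ, IntervalIntegrable (fun s => c * h s) volume t 1 :=
    fun c => hint.const_mul c
  have hA : (0:ℝ) < (m:ℝ) + 3 := by positivity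
  -- lower comparison: (m+1) * I < FTC value
  have hlow : ((m:ℝ)+1) * I < (1 - t^2)^(m+2) / t^(m+1) := by
    rw [← hFTC]
    have hpos : 0 < ∫ s in t..1,
        ((((m:ℝ)+1) + ((m:ℝ)+3) * s^2) * h s - ((m:ℝ)+1) * h s) := by
      apply intervalIntegral.intervalIntegral_pos_of_pos_on
      · exact (hintq _ _).sub (hintc _)
      · intro s hs
        have h1 : 0 < s := lt_trans ht0 hs.1
        have hhp := hposIoo s hs
        nlinarith [mul_pos (mul_pos hA (mul_pos h1 h1)) hhp]
      · exact ht1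
    rw [intervalIntegral.integral_sub (hintq _ _) (hintc _),
      intervalIntegral.integral_const_mul] at hpos
    linarith
  -- upper comparison: FTC value < (2m+4) * I
  have hupp : (1 - t^2)^(m+2) / t^(m+1) < (2*(m:ℝ)+4) * I := by
    rw [← hFTC]
    have hpos : 0 < ∫ s in t..1,
        ((2*(m:ℝ)+4) * h s - (((m:ℝ)+1) + ((m:ℝ)+3) * s^2) * h s) := by
      apply intervalIntegral.intervalIntegral_pos_of_pos_on
      · exact (hintc _).sub (hintq _ _)
      · intro s hs
        have h1 : 0 < s := lt_trans ht0 hs.1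
        have h2 : 0 < 1 - s^2 := by nlinarith [hs.2]
        have hhp := hposIoo s hs
        nlinarith [mul_pos (mul_pos hA h2) hhp]
      · exact ht1
    rw [intervalIntegral.integral_sub (hintc _) (hintq _ _),
      intervalIntegral.integral_const_mul] at hpos
    linarith
  -- express gfun
  have hg : gfun (m+3) t = (1 / ((m:ℝ)+3)) * I := by
    simp only [gfun, hI, hh, show m+3-2 = m+1 from rfl, show m+3-1 = m+2 from rfl]
    push_cast
    ring_nf
  have hcast : ((m+3 : ℕ) : ℝ) = (m:ℝ) + 3 := by push_cast; ring
  rw [show m + 3 - 1 = m + 2 from rfl, show m + 3 - 2 = m + 1 from rfl, hcast, hg]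
  set F : ℝ := (1 - t^2)^(m+2) / t^(m+1) with hF
  have hFpos : 0 < F := by positivity
  have hm3 : (0:ℝ) < (m:ℝ) + 3 := hA
  have hC : 1 / (2 * ((m:ℝ)+3) * ((m:ℝ)+3-1)) * F < 1 / ((m:ℝ)+3) * I := by
    rw [div_mul_eq_mul_div, one_mul, div_mul_eq_mul_div, one_mul,
      div_lt_div_iff₀ (by nlinarith) hm3]
    nlinarith [mul_lt_mul_of_pos_right hupp hm3]
  have hD : 1 / ((m:ℝ)+3) * I < 1 / (((m:ℝ)+3) * ((m:ℝ)+3-2)) * F := by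
    rw [div_mul_eq_mul_div, one_mul, div_mul_eq_mul_div, one_mul,
      div_lt_div_iff₀ hm3 (by nlinarith)]
    nlinarith [mul_lt_mul_of_pos_right hlow hm3]
  have hquot : t^(m+1) * (1/((m:ℝ)+3) * I) / (1 - t^2)^(m+2)
      = (1/((m:ℝ)+3) * I) / F := by
    rw [hF]
    field_simp
  refine ⟨⟨?_, ?_⟩, ?_, ?_⟩
  · rw [hquot, lt_div_iff₀ hFpos]; exact hC
  · rw [hquot, div_lt_iff₀ hFpos]; exact hD
  · exact hC
  · exact hD
end

section
/- Let n ≥ 3 and let ψ ∈ C(𝔹ⁿ,ℝⁿ) satisfy ∫_{𝔹ⁿ} (1−|x|²)^{n−1} |ψ(x)| dτ(x) ≤ μ₁ for some constant μ₁ ≥ 0, and suppose |ψ(x)| ≤ K for all x with |x| < 1/2, where K = sup{ |ψ(x)| : |x| < 1/2 }. Then ∫_{𝔹ⁿ} g(|x|) |ψ(x)| dτ(x) ≤ K / (2n(n−1)(3/4)ⁿ) + 2^{n−1} μ₁ / (n(n−1)); in particular this integral is finite. -/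
open MeasureTheory Metric Set

section AuxProofs

open MeasureTheory Metric Set

private lemma aux_ftc (n : ℕ) (hn : 3 ≤ n) (a b : ℝ) :
    ∫ s in a..b, s * (1 - s ^ 2) ^ (n - 2) =
      ((1 - a ^ 2) ^ (n - 1) - (1 - b ^ 2) ^ (n - 1)) / (2 * ((n : ℝ) - 1)) := by
  obtain ⟨m, rfl⟩ : ∃ m, n = m + 3 := ⟨n - 3, by omega⟩
  simp only [show m + 3 - 1 = m + 2 by omega, show m + 3 - 2 = m + 1 by omega]
  have hd : ∀ s : ℝ, HasDerivAt (fun t : ℝ => -((1 - t ^ 2) ^ (m + 2) / (2 * ((m : ℝ) + 2))))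
      (s * (1 - s ^ 2) ^ (m + 1)) s := by
    intro s
    have h1 : HasDerivAt (fun t : ℝ => 1 - t ^ 2) (-(2 * s)) s := by
      simpa using ((hasDerivAt_pow 2 s).const_sub 1)
    have h3 := ((h1.pow (m + 2)).div_const (2 * ((m : ℝ) + 2))).neg
    refine h3.congr_deriv ?_
    have h4 : ((m : ℝ) + 2) ≠ 0 := by positivity
    simp only [show m + 2 - 1 = m + 1 by omega]
    push_cast
    field_simp
  rw [intervalIntegral.integral_eq_sub_of_hasDerivAt (fun s _ => hd s)
      ((by fun_prop : Continuous fun s : ℝ => s * (1 - s ^ 2) ^ (m + 1)).intervalIntegrable a b)]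
  have h4 : ((m : ℝ) + 2) ≠ 0 := by positivity
  push_cast
  rw [show ((m:ℝ) + 3 - 1) = (m:ℝ) + 2 by ring]
  field_simp
  try ring

private lemma aux_phi_int (n : ℕ) {r : ℝ} (hr : 0 < r) :
    IntervalIntegrable (fun s : ℝ => (1 - s ^ 2) ^ (n - 2) / s ^ (n - 1)) volume r 1 := by
  apply ContinuousOn.intervalIntegrable
  apply ContinuousOn.div (by fun_prop) (by fun_prop)
  intro s hs
  have h0 : 0 < s := lt_of_lt_of_le (lt_min hr one_pos) hs.1
  exact pow_ne_zero _ h0.ne'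

private lemma aux_gfun_nonneg (n : ℕ) {r : ℝ} (h0 : 0 ≤ r) (h1 : r ≤ 1) : 0 ≤ gfun n r := by
  unfold gfun
  apply mul_nonneg (by positivity)
  apply intervalIntegral.integral_nonneg h1
  intro s hs
  have h2 : 0 ≤ 1 - s ^ 2 := by nlinarith [hs.1, hs.2]
  exact div_nonneg (pow_nonneg h2 _) (pow_nonneg (le_trans h0 hs.1) _)

private lemma aux_gfun_le (n : ℕ) (hn : 3 ≤ n) {r : ℝ} (hr : 1 / 2 ≤ r) (hr1 : r ≤ 1) :
    gfun n r ≤ 2 ^ (n - 1) / ((n : ℝ) * ((n : ℝ) - 1)) * (1 - r ^ 2) ^ (n - 1) := by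
  have hr0 : 0 < r := by linarith
  have key : (∫ s in r..(1:ℝ), (1 - s ^ 2) ^ (n - 2) / s ^ (n - 1))
      ≤ ∫ s in r..(1:ℝ), 2 ^ n * (s * (1 - s ^ 2) ^ (n - 2)) := by
    apply intervalIntegral.integral_mono_on hr1 (aux_phi_int n hr0)
      (((by fun_prop : Continuous fun s : ℝ => 2 ^ n * (s * (1 - s ^ 2) ^ (n - 2)))).intervalIntegrable _ _)
    intro s hs
    have hs1 : 1 / 2 ≤ s := le_trans hr hs.1
    have hs2 : s ≤ 1 := hs.2
    have hsp : (0 : ℝ) < s := by linarith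
    rw [div_le_iff₀ (by positivity)]
    have h1 : (1 : ℝ) ≤ (2 * s) ^ n := one_le_pow₀ (by linarith)
    have h2 : (0 : ℝ) ≤ (1 - s ^ 2) ^ (n - 2) := by
      apply pow_nonneg; nlinarith
    calc (1 - s ^ 2) ^ (n - 2) = (1 - s ^ 2) ^ (n - 2) * 1 := by ring
      _ ≤ (1 - s ^ 2) ^ (n - 2) * (2 * s) ^ n := mul_le_mul_of_nonneg_left h1 h2
      _ = 2 ^ n * (s * (1 - s ^ 2) ^ (n - 2)) * s ^ (n - 1) := by
          rw [mul_pow]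
          have hsn : s ^ n = s * s ^ (n - 1) := by
            conv_lhs => rw [show n = (n - 1) + 1 by omega]
            rw [pow_succ]; ring
          rw [hsn]; ring
  rw [intervalIntegral.integral_const_mul, aux_ftc n hn] at key
  obtain ⟨m, rfl⟩ : ∃ m, n = m + 3 := ⟨n - 3, by omega⟩
  simp only [show m + 3 - 1 = m + 2 by omega] at key ⊢
  unfold gfun
  simp only [show m + 3 - 1 = m + 2 by omega, show m + 3 - 2 = m + 1 by omega]
  have hkey2 : (∫ s in r..(1:ℝ), (1 - s ^ 2) ^ (m + 1) / s ^ (m + 2))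
      ≤ 2 ^ (m + 2) * (1 - r ^ 2) ^ (m + 2) / ((m : ℝ) + 2) := by
    refine le_trans key (le_of_eq ?_)
    push_cast
    rw [show ((1:ℝ) - 1 ^ 2) = 0 by norm_num, zero_pow (by omega : m + 2 ≠ 0)]
    rw [show (2:ℝ) ^ (m + 3) = 2 * 2 ^ (m + 2) by rw [pow_succ]; ring,
      show ((m:ℝ) + 3 - 1) = (m:ℝ) + 2 by ring]
    have h5 : ((m:ℝ) + 2) ≠ 0 := by positivity
    field_simp
    ring
  refine le_trans (mul_le_mul_of_nonneg_left hkey2 (by positivity)) (le_of_eq ?_)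
  have h5 : ((m:ℝ) + 2) ≠ 0 := by positivity
  have h6 : ((m:ℝ) + 3) ≠ 0 := by positivity
  push_cast
  rw [show ((m:ℝ) + 3 - 1) = (m:ℝ) + 2 by ring]
  field_simp
  try ring

end AuxProofs


open MeasureTheory Metric Set in
set_option maxHeartbeats 1600000 in
/-- `∫_{𝔹ⁿ} g(|x|)|ψ(x)| dτ(x)` is finite, with an explicit bound. -/
theorem stmt_7 (n : ℕ) (hn : 3 ≤ n) (ψ : En n → En n)
    (hψc : ContinuousOn ψ (ball (0 : En n) 1))
    (μ₁ : ℝ) (hμ₁ : 0 ≤ μ₁)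
    (hint : ∫⁻ x in ball (0 : En n) 1,
        ENNReal.ofReal ((1 - ‖x‖ ^ 2) ^ (n - 1) * ‖ψ x‖) ∂(tauMeasure n)
          ≤ ENNReal.ofReal μ₁)
    (K : ℝ) (hK0 : 0 ≤ K) (hK : ∀ x : En n, ‖x‖ < 1 / 2 → ‖ψ x‖ ≤ K) :
    ∫⁻ x in ball (0 : En n) 1,
        ENNReal.ofReal (gfun n ‖x‖ * ‖ψ x‖) ∂(tauMeasure n)
      ≤ ENNReal.ofReal
          (K / (2 * (n : ℝ) * ((n : ℝ) - 1) * (3 / 4) ^ n)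
            + 2 ^ (n - 1) * μ₁ / ((n : ℝ) * ((n : ℝ) - 1))) := by
  haveI : NeZero n := ⟨by omega⟩
  have hn3 : (3 : ℝ) ≤ (n : ℝ) := by exact_mod_cast hn
  have hn0 : (0 : ℝ) < (n : ℝ) := by linarith
  have hn1 : (0 : ℝ) < (n : ℝ) - 1 := by linarith
  have hV0 : (volume : Measure (En n)) (ball 0 1) ≠ 0 := (measure_ball_pos _ _ one_pos).ne'
  have hVtop : (volume : Measure (En n)) (ball 0 1) ≠ ⊤ := measure_ball_lt_top.ne
  have hnu_ball : ∀ r : ℝ, 0 ≤ r → (volume : Measure (En n)) (ball 0 r)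
      = ENNReal.ofReal (r ^ n) * volume (ball (0 : En n) 1) := fun r hr => by
    rw [Measure.addHaar_ball _ _ hr, finrank_euclideanSpace_fin]
  -- split the integral
  have hsplit : (∫⁻ x in ball (0 : En n) 1, ENNReal.ofReal (gfun n ‖x‖ * ‖ψ x‖) ∂(tauMeasure n))
      = (∫⁻ x in ball (0 : En n) (1/2), ENNReal.ofReal (gfun n ‖x‖ * ‖ψ x‖) ∂(tauMeasure n))
        + ∫⁻ x in ball (0 : En n) 1 \ ball 0 (1/2),
            ENNReal.ofReal (gfun n ‖x‖ * ‖ψ x‖) ∂(tauMeasure n) := by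
    rw [← lintegral_inter_add_diff (B := ball (0 : En n) (1/2)) _ (ball (0 : En n) 1)
        measurableSet_ball,
      inter_eq_self_of_subset_right (ball_subset_ball (by norm_num))]
  -- the outer part
  have hC : (0 : ℝ) ≤ 2 ^ (n - 1) / ((n : ℝ) * ((n : ℝ) - 1)) := by
    apply div_nonneg (by positivity) (mul_pos hn0 hn1).le
  have houter : (∫⁻ x in ball (0 : En n) 1 \ ball 0 (1/2),
        ENNReal.ofReal (gfun n ‖x‖ * ‖ψ x‖) ∂(tauMeasure n))
      ≤ ENNReal.ofReal (2 ^ (n - 1) * μ₁ / ((n : ℝ) * ((n : ℝ) - 1))) := by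
    have step1 : (∫⁻ x in ball (0 : En n) 1 \ ball 0 (1/2),
          ENNReal.ofReal (gfun n ‖x‖ * ‖ψ x‖) ∂(tauMeasure n))
        ≤ ∫⁻ x in ball (0 : En n) 1 \ ball 0 (1/2),
            ENNReal.ofReal (2 ^ (n - 1) / ((n : ℝ) * ((n : ℝ) - 1)))
              * ENNReal.ofReal ((1 - ‖x‖ ^ 2) ^ (n - 1) * ‖ψ x‖) ∂(tauMeasure n) := by
      apply lintegral_mono_ae
      filter_upwards [ae_restrict_mem (measurableSet_ball.diff measurableSet_ball)] with x hx
      obtain ⟨hx1, hx2⟩ := hx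
      rw [mem_ball_zero_iff] at hx1
      have hx2' : 1/2 ≤ ‖x‖ := not_lt.mp (by simpa [mem_ball_zero_iff] using hx2)
      rw [← ENNReal.ofReal_mul hC]
      apply ENNReal.ofReal_le_ofReal
      calc gfun n ‖x‖ * ‖ψ x‖
          ≤ (2 ^ (n - 1) / ((n : ℝ) * ((n : ℝ) - 1)) * (1 - ‖x‖ ^ 2) ^ (n - 1)) * ‖ψ x‖ :=
            mul_le_mul_of_nonneg_right (aux_gfun_le n hn hx2' hx1.le) (norm_nonneg _)
        _ = 2 ^ (n - 1) / ((n : ℝ) * ((n : ℝ) - 1)) * ((1 - ‖x‖ ^ 2) ^ (n - 1) * ‖ψ x‖) := by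
            ring
    refine le_trans step1 ?_
    rw [lintegral_const_mul' _ _ ENNReal.ofReal_ne_top]
    calc ENNReal.ofReal (2 ^ (n - 1) / ((n : ℝ) * ((n : ℝ) - 1)))
          * ∫⁻ x in ball (0 : En n) 1 \ ball 0 (1/2),
              ENNReal.ofReal ((1 - ‖x‖ ^ 2) ^ (n - 1) * ‖ψ x‖) ∂(tauMeasure n)
        ≤ ENNReal.ofReal (2 ^ (n - 1) / ((n : ℝ) * ((n : ℝ) - 1))) * ENNReal.ofReal μ₁ :=
          mul_le_mul_right (le_trans (lintegral_mono_set diff_subset) hint) _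
      _ = ENNReal.ofReal (2 ^ (n - 1) * μ₁ / ((n : ℝ) * ((n : ℝ) - 1))) := by
          rw [← ENNReal.ofReal_mul hC]; congr 1; ring
  -- the inner part
  have hmeas_d : Measurable fun x : En n => ENNReal.ofReal ((1 - ‖x‖ ^ 2) ^ n)⁻¹ :=
    (((by fun_prop : Continuous fun x : En n => (1 - ‖x‖ ^ 2) ^ n).measurable).inv).ennreal_ofReal
  -- key radial estimate
  have hT : (∫⁻ x in ball (0 : En n) (1/2), ENNReal.ofReal (gfun n ‖x‖) ∂(volume : Measure (En n)))
      ≤ ENNReal.ofReal (1 / (2 * (n : ℝ) * ((n : ℝ) - 1))) * volume (ball (0 : En n) 1) := by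
    set u : En n → ℝ → ENNReal := fun x s =>
      (Ioi ‖x‖).indicator (fun t => ENNReal.ofReal ((1 - t ^ 2) ^ (n - 2) / t ^ (n - 1))) s with hu
    have hae : ∀ᵐ x ∂((volume : Measure (En n)).restrict (ball (0 : En n) (1/2))),
        ENNReal.ofReal (gfun n ‖x‖)
          = ENNReal.ofReal (1 / (n : ℝ)) * ∫⁻ s in Ioc (0 : ℝ) 1, u x s ∂volume := by
      have hx00 : ∀ᵐ x : En n ∂volume, x ≠ 0 := ae_iff.2 (by simp [measure_singleton])
      filter_upwards [ae_restrict_mem measurableSet_ball, ae_restrict_of_ae hx00] with x hx hx0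
      rw [mem_ball_zero_iff] at hx
      have hxn : 0 < ‖x‖ := norm_pos_iff.2 hx0
      have hx1 : ‖x‖ ≤ 1 := by linarith
      have hsets : Ioi ‖x‖ ∩ Ioc (0 : ℝ) 1 = Ioc ‖x‖ 1 := by
        ext s; simp only [mem_inter_iff, mem_Ioi, mem_Ioc]
        constructor
        · rintro ⟨h1, _, h3⟩; exact ⟨h1, h3⟩
        · rintro ⟨h1, h2⟩; exact ⟨h1, lt_trans hxn h1, h2⟩
      have hrhs : (∫⁻ s in Ioc (0 : ℝ) 1, u x s ∂volume)
          = ∫⁻ s in Ioc ‖x‖ 1, ENNReal.ofReal ((1 - s ^ 2) ^ (n - 2) / s ^ (n - 1)) ∂volume := by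
        rw [hu]
        rw [lintegral_indicator measurableSet_Ioi, Measure.restrict_restrict measurableSet_Ioi,
          hsets]
      have hint' : IntegrableOn (fun s : ℝ => (1 - s ^ 2) ^ (n - 2) / s ^ (n - 1))
          (Ioc ‖x‖ 1) volume :=
        (intervalIntegrable_iff_integrableOn_Ioc_of_le hx1).1 (aux_phi_int n hxn)
      have hnn : 0 ≤ᵐ[volume.restrict (Ioc ‖x‖ 1)]
          fun s : ℝ => (1 - s ^ 2) ^ (n - 2) / s ^ (n - 1) := by
        filter_upwards [ae_restrict_mem measurableSet_Ioc] with s hs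
        have h2 : (0 : ℝ) ≤ 1 - s ^ 2 := by nlinarith [hs.1, hs.2, hxn]
        have h3 : (0 : ℝ) ≤ s := le_of_lt (lt_trans hxn hs.1)
        exact div_nonneg (pow_nonneg h2 _) (pow_nonneg h3 _)
      rw [hrhs]
      simp only [gfun]
      rw [ENNReal.ofReal_mul (by positivity), intervalIntegral.integral_of_le hx1,
        ofReal_integral_eq_lintegral_ofReal hint' hnn]
    rw [lintegral_congr_ae hae, lintegral_const_mul' _ _ ENNReal.ofReal_ne_top]
    have hswap : (∫⁻ x in ball (0 : En n) (1/2), ∫⁻ s in Ioc (0 : ℝ) 1, u x s ∂volume ∂volume)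
        = ∫⁻ s in Ioc (0 : ℝ) 1, ∫⁻ x in ball (0 : En n) (1/2), u x s ∂volume ∂volume := by
      apply lintegral_lintegral_swap
      apply Measurable.aemeasurable
      have huncurry : Function.uncurry u = fun p : En n × ℝ =>
          ({q : En n × ℝ | ‖q.1‖ < q.2}).indicator
            (fun q => ENNReal.ofReal ((1 - q.2 ^ 2) ^ (n - 2) / q.2 ^ (n - 1))) p := by
        ext ⟨x, s⟩
        by_cases h : ‖x‖ < s <;>
          simp [Function.uncurry, hu, Set.indicator_apply, h, Set.mem_Ioi]
      rw [huncurry]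
      apply Measurable.indicator
      · apply Measurable.ennreal_ofReal
        apply Measurable.div
        · fun_prop
        · fun_prop
      · exact measurableSet_lt (by fun_prop) (by fun_prop)
    rw [hswap]
    have hxint : ∀ᵐ s ∂(volume : Measure ℝ), s ∈ Ioc (0 : ℝ) 1 →
        (∫⁻ x in ball (0 : En n) (1/2), u x s ∂volume)
          = ENNReal.ofReal ((1 - s ^ 2) ^ (n - 2) / s ^ (n - 1))
              * ENNReal.ofReal ((min s (1/2)) ^ n) * volume (ball (0 : En n) 1) := by
      apply Filter.Eventually.of_forall
      intro s hs
      have hsmem : ∀ x : En n, u x s = (ball (0 : En n) s).indicator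
          (fun _ => ENNReal.ofReal ((1 - s ^ 2) ^ (n - 2) / s ^ (n - 1))) x := by
        intro x
        by_cases h : ‖x‖ < s <;>
          simp [hu, Set.indicator_apply, mem_ball_zero_iff, h, Set.mem_Ioi]
      rw [lintegral_congr hsmem]
      rw [lintegral_indicator measurableSet_ball, Measure.restrict_restrict measurableSet_ball,
        setLIntegral_const]
      rw [show ball (0 : En n) s ∩ ball 0 (1/2) = ball 0 (min s (1/2)) by
        ext y; simp [mem_ball, lt_min_iff]]
      rw [hnu_ball (min s (1/2)) (le_min hs.1.le (by norm_num)), ← mul_assoc]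
    rw [setLIntegral_congr_fun_ae measurableSet_Ioc hxint]
    have hfact : (∫⁻ s in Ioc (0 : ℝ) 1,
          ENNReal.ofReal ((1 - s ^ 2) ^ (n - 2) / s ^ (n - 1))
            * ENNReal.ofReal ((min s (1/2)) ^ n) * volume (ball (0 : En n) 1) ∂volume)
        = (∫⁻ s in Ioc (0 : ℝ) 1,
            ENNReal.ofReal ((1 - s ^ 2) ^ (n - 2) / s ^ (n - 1))
              * ENNReal.ofReal ((min s (1/2)) ^ n) ∂volume) * volume (ball (0 : En n) 1) :=
      lintegral_mul_const' _ _ hVtop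
    rw [hfact]
    -- the 1-dimensional estimate
    have hS : (∫⁻ s in Ioc (0 : ℝ) 1,
          ENNReal.ofReal ((1 - s ^ 2) ^ (n - 2) / s ^ (n - 1))
            * ENNReal.ofReal ((min s (1/2)) ^ n) ∂volume)
        ≤ ENNReal.ofReal (1 / (2 * ((n : ℝ) - 1))) := by
      rw [show Ioc (0 : ℝ) 1 = Ioc (0:ℝ) (1/2) ∪ Ioc (1/2 : ℝ) 1 by
            rw [Set.Ioc_union_Ioc_eq_Ioc] <;> norm_num,
        lintegral_union measurableSet_Ioc (Set.Ioc_disjoint_Ioc_of_le le_rfl)]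
      have h34 : (3/4 : ℝ) ^ (n - 1) ≤ 1 := pow_le_one₀ (by norm_num) (by norm_num)
      have hS1 : (∫⁻ s in Ioc (0 : ℝ) (1/2),
            ENNReal.ofReal ((1 - s ^ 2) ^ (n - 2) / s ^ (n - 1))
              * ENNReal.ofReal ((min s (1/2)) ^ n) ∂volume)
          = ENNReal.ofReal ((1 - (3/4 : ℝ) ^ (n - 1)) / (2 * ((n : ℝ) - 1))) := by
        have heq1 : ∀ᵐ s ∂(volume : Measure ℝ), s ∈ Ioc (0 : ℝ) (1/2) →
            ENNReal.ofReal ((1 - s ^ 2) ^ (n - 2) / s ^ (n - 1))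
              * ENNReal.ofReal ((min s (1/2)) ^ n)
              = ENNReal.ofReal (s * (1 - s ^ 2) ^ (n - 2)) := by
          apply Filter.Eventually.of_forall
          intro s hs
          have hs0 : 0 < s := hs.1
          have hposA : (0:ℝ) ≤ (1 - s ^ 2) ^ (n - 2) / s ^ (n - 1) :=
            div_nonneg (pow_nonneg (by nlinarith [hs.1, hs.2] : (0:ℝ) ≤ 1 - s ^ 2) _)
              (pow_nonneg hs0.le _)
          rw [min_eq_left hs.2, ← ENNReal.ofReal_mul hposA]
          congr 1
          have hne : s ^ (n - 1) ≠ 0 := pow_ne_zero _ hs0.ne'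
          have hsn : s ^ n = s ^ (n - 1) * s := by
            conv_lhs => rw [show n = (n - 1) + 1 by omega]
            rw [pow_succ]
          field_simp
          rw [hsn]; ring
        rw [setLIntegral_congr_fun_ae measurableSet_Ioc heq1]
        have hInt1 : IntegrableOn (fun s : ℝ => s * (1 - s ^ 2) ^ (n - 2))
            (Ioc (0:ℝ) (1/2)) volume :=
          (by fun_prop : Continuous fun s : ℝ => s * (1 - s ^ 2) ^ (n - 2)).integrableOn_Ioc
        have hnn1 : 0 ≤ᵐ[volume.restrict (Ioc (0:ℝ) (1/2))]
            fun s : ℝ => s * (1 - s ^ 2) ^ (n - 2) := by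
          filter_upwards [ae_restrict_mem measurableSet_Ioc] with s hs
          have h2 : (0 : ℝ) ≤ 1 - s ^ 2 := by nlinarith [hs.1, hs.2]
          exact mul_nonneg hs.1.le (pow_nonneg h2 _)
        rw [← ofReal_integral_eq_lintegral_ofReal hInt1 hnn1,
          ← intervalIntegral.integral_of_le (by norm_num : (0:ℝ) ≤ 1/2), aux_ftc n hn]
        norm_num
      have hS2 : (∫⁻ s in Ioc (1/2 : ℝ) 1,
            ENNReal.ofReal ((1 - s ^ 2) ^ (n - 2) / s ^ (n - 1))
              * ENNReal.ofReal ((min s (1/2)) ^ n) ∂volume)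
          ≤ ENNReal.ofReal ((3/4 : ℝ) ^ (n - 1) / (2 * ((n : ℝ) - 1))) := by
        have hstep : ∀ᵐ s ∂(volume.restrict (Ioc (1/2 : ℝ) 1)),
            ENNReal.ofReal ((1 - s ^ 2) ^ (n - 2) / s ^ (n - 1))
              * ENNReal.ofReal ((min s (1/2)) ^ n)
              ≤ ENNReal.ofReal (s * (1 - s ^ 2) ^ (n - 2)) := by
          filter_upwards [ae_restrict_mem measurableSet_Ioc] with s hs
          have h1 : (1/2 : ℝ) < s := hs.1
          have h2 : s ≤ 1 := hs.2
          have hs0 : (0 : ℝ) < s := by linarith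
          have hA : (0 : ℝ) ≤ (1 - s ^ 2) ^ (n - 2) := pow_nonneg (by nlinarith) _
          have hposA : (0:ℝ) ≤ (1 - s ^ 2) ^ (n - 2) / s ^ (n - 1) :=
            div_nonneg hA (pow_nonneg hs0.le _)
          rw [min_eq_right h1.le, ← ENNReal.ofReal_mul hposA]
          apply ENNReal.ofReal_le_ofReal
          rw [div_mul_eq_mul_div, div_le_iff₀ (by positivity)]
          have hsn : s * s ^ (n - 1) = s ^ n := by
            conv_rhs => rw [show n = (n - 1) + 1 by omega]
            rw [pow_succ]; ring
          calc (1 - s ^ 2) ^ (n - 2) * (1/2 : ℝ) ^ n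
              ≤ (1 - s ^ 2) ^ (n - 2) * s ^ n :=
                mul_le_mul_of_nonneg_left (pow_le_pow_left₀ (by norm_num) h1.le n) hA
            _ = s * (1 - s ^ 2) ^ (n - 2) * s ^ (n - 1) := by rw [← hsn]; ring
        have hInt2 : IntegrableOn (fun s : ℝ => s * (1 - s ^ 2) ^ (n - 2))
            (Ioc (1/2:ℝ) 1) volume :=
          (by fun_prop : Continuous fun s : ℝ => s * (1 - s ^ 2) ^ (n - 2)).integrableOn_Ioc
        have hnn2 : 0 ≤ᵐ[volume.restrict (Ioc (1/2:ℝ) 1)]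
            fun s : ℝ => s * (1 - s ^ 2) ^ (n - 2) := by
          filter_upwards [ae_restrict_mem measurableSet_Ioc] with s hs
          have h2 : (0 : ℝ) ≤ 1 - s ^ 2 := by nlinarith [hs.1, hs.2]
          exact mul_nonneg (by linarith [hs.1]) (pow_nonneg h2 _)
        refine le_trans (lintegral_mono_ae hstep) (le_of_eq ?_)
        rw [← ofReal_integral_eq_lintegral_ofReal hInt2 hnn2,
          ← intervalIntegral.integral_of_le (by norm_num : (1/2:ℝ) ≤ 1), aux_ftc n hn]
        rw [show ((1:ℝ) - 1 ^ 2) = 0 by norm_num, zero_pow (by omega : n - 1 ≠ 0)]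
        norm_num
      calc _ ≤ ENNReal.ofReal ((1 - (3/4 : ℝ) ^ (n - 1)) / (2 * ((n : ℝ) - 1)))
            + ENNReal.ofReal ((3/4 : ℝ) ^ (n - 1) / (2 * ((n : ℝ) - 1))) :=
          add_le_add hS1.le hS2
        _ = ENNReal.ofReal (1 / (2 * ((n : ℝ) - 1))) := by
          rw [← ENNReal.ofReal_add (div_nonneg (by linarith) (by linarith))
            (div_nonneg (by positivity) (by linarith))]
          rw [← add_div, sub_add_cancel]
    calc ENNReal.ofReal (1 / (n : ℝ))
          * ((∫⁻ s in Ioc (0 : ℝ) 1,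
              ENNReal.ofReal ((1 - s ^ 2) ^ (n - 2) / s ^ (n - 1))
                * ENNReal.ofReal ((min s (1/2)) ^ n) ∂volume) * volume (ball (0 : En n) 1))
        ≤ ENNReal.ofReal (1 / (n : ℝ))
          * (ENNReal.ofReal (1 / (2 * ((n : ℝ) - 1))) * volume (ball (0 : En n) 1)) :=
          mul_le_mul_right (mul_le_mul_left hS _) _
      _ = ENNReal.ofReal (1 / (n : ℝ) * (1 / (2 * ((n : ℝ) - 1)))) * volume (ball (0 : En n) 1) := by
          rw [← mul_assoc, ← ENNReal.ofReal_mul (by positivity)]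
      _ = ENNReal.ofReal (1 / (2 * (n : ℝ) * ((n : ℝ) - 1))) * volume (ball (0 : En n) 1) := by
          congr 2
          field_simp
  -- assemble the inner bound
  have hinner : (∫⁻ x in ball (0 : En n) (1/2),
        ENNReal.ofReal (gfun n ‖x‖ * ‖ψ x‖) ∂(tauMeasure n))
      ≤ ENNReal.ofReal (K / (2 * (n : ℝ) * ((n : ℝ) - 1) * (3/4 : ℝ) ^ n)) := by
    rw [tauMeasure, setLIntegral_withDensity_eq_setLIntegral_mul_non_measurable _ hmeas_d _
        measurableSet_ball (Filter.Eventually.of_forall fun x => ENNReal.ofReal_lt_top)]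
    rw [nuMeasure, Measure.restrict_smul, lintegral_smul_measure]
    simp only [Pi.mul_apply]
    have hpoint : ∀ᵐ x ∂((volume : Measure (En n)).restrict (ball (0 : En n) (1/2))),
        ENNReal.ofReal ((1 - ‖x‖ ^ 2) ^ n)⁻¹ * ENNReal.ofReal (gfun n ‖x‖ * ‖ψ x‖)
          ≤ ENNReal.ofReal ((4/3 : ℝ) ^ n * K) * ENNReal.ofReal (gfun n ‖x‖) := by
      filter_upwards [ae_restrict_mem measurableSet_ball] with x hx
      rw [mem_ball_zero_iff] at hx
      have hx0 : 0 ≤ ‖x‖ := norm_nonneg x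
      have h34 : (3/4 : ℝ) ≤ 1 - ‖x‖ ^ 2 := by nlinarith
      have hinv : ((1 - ‖x‖ ^ 2) ^ n)⁻¹ ≤ (4/3 : ℝ) ^ n := by
        rw [← inv_pow]
        calc ((1 - ‖x‖ ^ 2)⁻¹) ^ n ≤ ((3/4 : ℝ)⁻¹) ^ n := by
              apply pow_le_pow_left₀ (by positivity)
              exact inv_anti₀ (by norm_num) h34
          _ = (4/3 : ℝ) ^ n := by norm_num
      have hg0 : 0 ≤ gfun n ‖x‖ := aux_gfun_nonneg n hx0 (by linarith)
      rw [← ENNReal.ofReal_mul (by positivity), ← ENNReal.ofReal_mul (by positivity)]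
      apply ENNReal.ofReal_le_ofReal
      calc ((1 - ‖x‖ ^ 2) ^ n)⁻¹ * (gfun n ‖x‖ * ‖ψ x‖)
          ≤ (4/3 : ℝ) ^ n * (gfun n ‖x‖ * K) :=
            mul_le_mul hinv (mul_le_mul_of_nonneg_left (hK x hx) hg0)
              (mul_nonneg hg0 (norm_nonneg _)) (by positivity)
        _ = (4/3 : ℝ) ^ n * K * gfun n ‖x‖ := by ring
    calc (volume (ball (0 : En n) 1))⁻¹
          * ∫⁻ x in ball (0 : En n) (1/2),
              ENNReal.ofReal ((1 - ‖x‖ ^ 2) ^ n)⁻¹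
                * ENNReal.ofReal (gfun n ‖x‖ * ‖ψ x‖) ∂volume
        ≤ (volume (ball (0 : En n) 1))⁻¹
          * (ENNReal.ofReal ((4/3 : ℝ) ^ n * K)
            * (ENNReal.ofReal (1 / (2 * (n : ℝ) * ((n : ℝ) - 1))) * volume (ball (0 : En n) 1))) := by
          apply mul_le_mul_right
          refine le_trans (lintegral_mono_ae hpoint) ?_
          rw [lintegral_const_mul' _ _ ENNReal.ofReal_ne_top]
          exact mul_le_mul_right hT _
      _ = ENNReal.ofReal ((4/3 : ℝ) ^ n * K) * ENNReal.ofReal (1 / (2 * (n : ℝ) * ((n : ℝ) - 1)))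
            * ((volume (ball (0 : En n) 1))⁻¹ * volume (ball (0 : En n) 1)) := by ring
      _ = ENNReal.ofReal ((4/3 : ℝ) ^ n * K * (1 / (2 * (n : ℝ) * ((n : ℝ) - 1)))) := by
          rw [ENNReal.inv_mul_cancel hV0 hVtop, mul_one,
            ← ENNReal.ofReal_mul (by positivity)]
      _ = ENNReal.ofReal (K / (2 * (n : ℝ) * ((n : ℝ) - 1) * (3/4 : ℝ) ^ n)) := by
          congr 1
          have h43 : (4/3 : ℝ) ^ n = ((3/4 : ℝ) ^ n)⁻¹ := by
            rw [← inv_pow]; norm_num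
          have h34n : ((3/4 : ℝ) ^ n) ≠ 0 := by positivity
          rw [h43]
          field_simp
  -- combine
  rw [hsplit]
  have hA : 0 ≤ K / (2 * (n : ℝ) * ((n : ℝ) - 1) * (3/4 : ℝ) ^ n) :=
    div_nonneg hK0 (by positivity)
  have hB : 0 ≤ 2 ^ (n - 1) * μ₁ / ((n : ℝ) * ((n : ℝ) - 1)) :=
    div_nonneg (mul_nonneg (by positivity) hμ₁) (mul_pos hn0 hn1).le
  calc _ ≤ ENNReal.ofReal (K / (2 * (n : ℝ) * ((n : ℝ) - 1) * (3/4 : ℝ) ^ n))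
        + ENNReal.ofReal (2 ^ (n - 1) * μ₁ / ((n : ℝ) * ((n : ℝ) - 1))) :=
      add_le_add hinner houter
    _ = _ := (ENNReal.ofReal_add hA hB).symm
end

section
/- For an integer n ≥ 3 define I₁(s) = ∫₀¹ F(1, (4−n)/2; n/2; ts) dt. Then: (a) if n ≥ 4, there exists a constant μ depending only on n such that |I₁(s)| ≤ μ for all s ∈ [0,1); (b) if n = 3 and s₀ ∈ (0,1), then |I₁(s)| ≤ 1/(1−s₀) for all s ∈ [0,s₀]. -/
open MeasureTheory Metric Set

section Aux

lemma poch_succ' (a : ℝ) (k : ℕ) : poch a (k + 1) = poch a k * (a + k) :=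
  ascPochhammer_succ_eval k a

lemma poch_one' (k : ℕ) : poch 1 k = k.factorial := by
  simpa [poch] using ascPochhammer_eval_one ℝ k

lemma poch_pos {a : ℝ} (ha : 0 < a) (k : ℕ) : 0 < poch a k := by
  induction k with
  | zero => simp [poch]
  | succ m ih =>
    rw [poch_succ']
    exact mul_pos ih (by positivity)

/-- Uniform bound for the hypergeometric function when `n ≥ 4`. -/
lemma hyperF_bound_aux (n : ℕ) (hn : 4 ≤ n) :
    ∃ μ : ℝ, ∀ x ∈ Icc (0 : ℝ) 1, |hyperF 1 ((4 - (n : ℝ)) / 2) ((n : ℝ) / 2) x| ≤ μ := by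
  set b : ℝ := (4 - (n : ℝ)) / 2 with hb_def
  set c : ℝ := (n : ℝ) / 2 with hc_def
  have hn4 : (4 : ℝ) ≤ (n : ℝ) := by exact_mod_cast hn
  have hb : b ≤ 0 := by rw [hb_def]; linarith
  have hc : 0 < c := by rw [hc_def]; linarith
  have hcb : c = b + ((n : ℝ) - 2) := by rw [hb_def, hc_def]; ring
  set a : ℕ → ℝ := fun k => poch b k / poch c k with ha_def
  set f : ℕ → ℝ := fun k => |a k| * ((k : ℝ) + 1) ^ 2 with hf_def
  -- the key decay step
  have step : ∀ k : ℕ, n ≤ k → f (k + 1) ≤ f k := by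
    intro k hk
    have hkn : (n : ℝ) ≤ (k : ℝ) := by exact_mod_cast hk
    have hbk : 0 ≤ b + (k : ℝ) := by rw [hb_def]; linarith
    have hpc := poch_pos hc
    have hpc' : 0 < poch c k := hpc k
    have key : (b + k) * ((k : ℝ) + 2) ^ 2 ≤ (c + k) * ((k : ℝ) + 1) ^ 2 := by
      nlinarith [sq_nonneg ((k : ℝ) + 1), sq_nonneg ((k : ℝ) + 2), hbk, hn4]
    have hck : (0 : ℝ) < c + k := by positivity
    have h1 : |a (k + 1)| = |a k| * ((b + k) / (c + k)) := by
      have heq : a (k + 1) = a k * ((b + k) / (c + k)) := by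
        rw [ha_def]
        simp only
        rw [poch_succ', poch_succ']
        field_simp
      rw [heq, abs_mul, abs_of_nonneg (div_nonneg hbk hck.le)]
    have h2 : (b + k) / (c + k) * ((k : ℝ) + 1 + 1) ^ 2 ≤ ((k : ℝ) + 1) ^ 2 := by
      rw [div_mul_eq_mul_div, div_le_iff₀ hck]
      nlinarith [key]
    have h3 := mul_le_mul_of_nonneg_left h2 (abs_nonneg (a k))
    rw [hf_def]
    calc |a (k + 1)| * (((k + 1 : ℕ) : ℝ) + 1) ^ 2
        = |a k| * ((b + ↑k) / (c + ↑k) * ((k : ℝ) + 1 + 1) ^ 2) := by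
          rw [h1]; push_cast; ring
      _ ≤ |a k| * ((k : ℝ) + 1) ^ 2 := h3
  -- uniform bound on f
  obtain ⟨M, hM⟩ : ∃ M : ℝ, ∀ k, f k ≤ M := by
    refine ⟨(Finset.range (n + 1)).sup' (by simp) f, ?_⟩
    intro k
    induction k with
    | zero => exact Finset.le_sup' f (by simp)
    | succ m ih =>
      rcases le_or_gt (m + 1) n with h | h
      · exact Finset.le_sup' f (Finset.mem_range.mpr (by omega))
      · exact (step m (by omega)).trans ih
  -- summability of |a|
  have h2 : Summable (fun k : ℕ => 1 / ((k : ℝ) + 1) ^ 2) := by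
    have h0 : Summable (fun k : ℕ => 1 / (k : ℝ) ^ 2) :=
      Real.summable_one_div_nat_pow.mpr one_lt_two
    have := (summable_nat_add_iff (f := fun k : ℕ => 1 / (k : ℝ) ^ 2) 1).mpr h0
    simpa [Nat.cast_add] using this
  have habs : ∀ k, |a k| ≤ M * (1 / ((k : ℝ) + 1) ^ 2) := by
    intro k
    have hk1 : (0 : ℝ) < ((k : ℝ) + 1) ^ 2 := by positivity
    have := hM k
    rw [hf_def] at this
    rw [mul_one_div, le_div_iff₀ hk1]
    exact this
  have hsum : Summable (fun k => |a k|) :=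
    Summable.of_nonneg_of_le (fun k => abs_nonneg _) habs (h2.mul_left M)
  refine ⟨∑' k, |a k|, ?_⟩
  intro x hx
  obtain ⟨hx0, hx1⟩ := hx
  -- rewrite summand
  have hsummand : ∀ k : ℕ,
      poch 1 k * poch b k / ((k.factorial : ℝ) * poch c k) * x ^ k = a k * x ^ k := by
    intro k
    have hfac : ((k.factorial : ℝ)) ≠ 0 := by positivity
    rw [poch_one', ha_def]
    field_simp
  have hxk : ∀ k : ℕ, |a k * x ^ k| ≤ |a k| := by
    intro k
    rw [abs_mul]
    refine mul_le_of_le_one_right (abs_nonneg _) ?_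
    rw [abs_of_nonneg (pow_nonneg hx0 k)]
    exact pow_le_one₀ hx0 hx1
  have hsx : Summable (fun k => |a k * x ^ k|) :=
    Summable.of_nonneg_of_le (fun k => abs_nonneg _) hxk hsum
  have hF : hyperF 1 b c x = ∑' k, a k * x ^ k := by
    unfold hyperF
    exact tsum_congr hsummand
  rw [hF]
  have hnorm : ‖∑' k, a k * x ^ k‖ ≤ ∑' k, ‖a k * x ^ k‖ := by
    refine norm_tsum_le_tsum_norm ?_
    simp only [Real.norm_eq_abs]
    exact hsx
  simp only [Real.norm_eq_abs] at hnorm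
  calc |∑' k, a k * x ^ k| ≤ ∑' k, |a k * x ^ k| := hnorm
    _ ≤ ∑' k, |a k| := Summable.tsum_le_tsum hxk hsx hsum

/-- Bound for the hypergeometric function in the case `n = 3`. -/
lemma hyperF_bound_n3 (x s₀ : ℝ) (hx0 : 0 ≤ x) (hxs : x ≤ s₀) (hs₀ : s₀ < 1) :
    |hyperF 1 ((1 : ℝ) / 2) ((3 : ℝ) / 2) x| ≤ 1 / (1 - s₀) := by
  have hx1 : x < 1 := lt_of_le_of_lt hxs hs₀
  have hple : ∀ k : ℕ, 0 ≤ poch (1 / 2) k ∧ poch (1 / 2) k ≤ poch (3 / 2) k := by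
    intro k
    induction k with
    | zero => simp [poch]
    | succ m ih =>
      obtain ⟨ih1, ih2⟩ := ih
      constructor
      · rw [poch_succ']
        have : (0 : ℝ) ≤ 1 / 2 + m := by positivity
        positivity
      · rw [poch_succ', poch_succ']
        have h1 : (0 : ℝ) ≤ 1 / 2 + m := by positivity
        have h2 : (1 / 2 : ℝ) + m ≤ 3 / 2 + m := by linarith
        have h3 : (0 : ℝ) ≤ 3 / 2 + m := by positivity
        exact mul_le_mul ih2 h2 h1 ((poch_pos (by norm_num) m).le)
  set g : ℕ → ℝ := fun k =>
    poch 1 k * poch (1 / 2) k / ((k.factorial : ℝ) * poch (3 / 2) k) * x ^ k with hg_def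
  have hg_nonneg : ∀ k, 0 ≤ g k := by
    intro k
    have h1 := (hple k).1
    have h2 := poch_pos (show (0:ℝ) < 3/2 by norm_num) k
    have h3 : (0:ℝ) < k.factorial := by positivity
    have h4 : (0:ℝ) ≤ poch 1 k := (poch_pos one_pos k).le
    have h5 : (0:ℝ) ≤ x ^ k := pow_nonneg hx0 k
    positivity
  have hg_le : ∀ k, g k ≤ x ^ k := by
    intro k
    rw [hg_def]
    have h2 := poch_pos (show (0:ℝ) < 3/2 by norm_num) k
    have h3 : (0:ℝ) < k.factorial := by positivity
    have hle : poch 1 k * poch (1 / 2) k / ((k.factorial : ℝ) * poch (3 / 2) k) ≤ 1 := by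
      rw [div_le_one (by positivity)]
      rw [poch_one']
      exact mul_le_mul_of_nonneg_left (hple k).2 (by positivity)
    calc poch 1 k * poch (1 / 2) k / ((k.factorial : ℝ) * poch (3 / 2) k) * x ^ k
        ≤ 1 * x ^ k := mul_le_mul_of_nonneg_right hle (pow_nonneg hx0 k)
      _ = x ^ k := one_mul _
  have hgeo : Summable (fun k : ℕ => x ^ k) := summable_geometric_of_lt_one hx0 hx1
  have hgsum : Summable g := Summable.of_nonneg_of_le hg_nonneg hg_le hgeo
  have hF : hyperF 1 (1 / 2) (3 / 2) x = ∑' k, g k := rfl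
  rw [hF]
  have h1 : (0 : ℝ) ≤ ∑' k, g k := tsum_nonneg hg_nonneg
  rw [abs_of_nonneg h1]
  calc ∑' k, g k ≤ ∑' k : ℕ, x ^ k := Summable.tsum_le_tsum hg_le hgsum hgeo
    _ = (1 - x)⁻¹ := tsum_geometric_of_lt_one hx0 hx1
    _ ≤ 1 / (1 - s₀) := by
        rw [one_div]
        exact inv_anti₀ (by linarith) (by linarith)

end Aux

/-- bounds for `I₁(s) = ∫₀¹ F(1,(4-n)/2; n/2; ts) dt`. -/
theorem stmt_14 (n : ℕ) (hn : 3 ≤ n) :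
    ((4 ≤ n) → ∃ μ : ℝ, ∀ s ∈ Ico (0 : ℝ) 1,
      |∫ t in (0 : ℝ)..1, hyperF 1 ((4 - (n : ℝ)) / 2) ((n : ℝ) / 2) (t * s)| ≤ μ) ∧
    (n = 3 → ∀ s₀ ∈ Ioo (0 : ℝ) 1, ∀ s ∈ Icc (0 : ℝ) s₀,
      |∫ t in (0 : ℝ)..1, hyperF 1 ((4 - (n : ℝ)) / 2) ((n : ℝ) / 2) (t * s)|
        ≤ 1 / (1 - s₀)) := by
  constructor
  · intro hn4
    obtain ⟨μ, hμ⟩ := hyperF_bound_aux n hn4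
    refine ⟨μ, ?_⟩
    intro s hs
    obtain ⟨hs0, hs1⟩ := hs
    have := intervalIntegral.norm_integral_le_of_norm_le_const
      (f := fun t => hyperF 1 ((4 - (n : ℝ)) / 2) ((n : ℝ) / 2) (t * s)) (a := 0) (b := 1)
      (C := μ) ?_
    · simpa [Real.norm_eq_abs] using this
    · intro t ht
      rw [Set.uIoc_of_le (by norm_num : (0:ℝ) ≤ 1)] at ht
      obtain ⟨ht0, ht1⟩ := ht
      refine hμ (t * s) ⟨mul_nonneg ht0.le hs0, ?_⟩
      calc t * s ≤ 1 * s := mul_le_mul_of_nonneg_right ht1 hs0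
        _ = s := one_mul s
        _ ≤ 1 := hs1.le
  · intro hn3 s₀ hs₀ s hs
    subst hn3
    obtain ⟨hs₀0, hs₀1⟩ := hs₀
    obtain ⟨hs0, hss₀⟩ := hs
    have heq : ((4 - ((3:ℕ) : ℝ)) / 2) = (1 : ℝ) / 2 := by norm_num
    have heq2 : (((3:ℕ) : ℝ) / 2) = (3 : ℝ) / 2 := by norm_num
    rw [heq, heq2]
    have := intervalIntegral.norm_integral_le_of_norm_le_const
      (f := fun t => hyperF 1 ((1:ℝ) / 2) ((3:ℝ) / 2) (t * s)) (a := 0) (b := 1)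
      (C := 1 / (1 - s₀)) ?_
    · simpa [Real.norm_eq_abs] using this
    · intro t ht
      rw [Set.uIoc_of_le (by norm_num : (0:ℝ) ≤ 1)] at ht
      obtain ⟨ht0, ht1⟩ := ht
      refine hyperF_bound_n3 (t * s) s₀ (mul_nonneg ht0.le hs0) ?_ hs₀1
      calc t * s ≤ 1 * s := mul_le_mul_of_nonneg_right ht1 hs0
        _ = s := one_mul s
        _ ≤ s₀ := hss₀
end

section
/- Let n ≥ 3. Then there exists a constant μ₅ depending only on n such that for every x ∈ 𝔹ⁿ, J_n(x) := ∫_{𝔹ⁿ} 1/( |y|^{n−2} [x,y]² ) dν(y) ≤ μ₅. -/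
open MeasureTheory Metric Set

open scoped ENNReal

lemma lemA (n k : ℕ) (hk : k < n) (R : ℝ) (hR : 0 < R) (c : ℝ) (hc : 0 ≤ c) :
    ∫⁻ y in ball (0 : En n) R, ENNReal.ofReal (c / ‖y‖ ^ k) ∂volume < ⊤ := by
  classical
  have hn : 0 < n := lt_of_le_of_lt (Nat.zero_le k) hk
  haveI : Nontrivial (En n) := by
    apply Module.nontrivial_of_finrank_pos (R := ℝ) (M := En n)
    rw [finrank_euclideanSpace_fin]
    exact hn
  set m : ℕ := n - k with hmdef
  have hm : n = k + m := by omega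
  have hm1 : 1 ≤ m := by omega
  set A : ℕ → Set (En n) := fun j => ball (0 : En n) (R / 2 ^ j) \ ball 0 (R / 2 ^ (j + 1)) with hA
  have hcover : ball (0 : En n) R ⊆ {0} ∪ ⋃ j, A j := by
    intro y hy
    rcases eq_or_ne y 0 with rfl | hy0
    · exact Or.inl rfl
    refine Or.inr ?_
    have hypos : 0 < ‖y‖ := norm_pos_iff.mpr hy0
    have hex : ∃ j : ℕ, R / 2 ^ (j + 1) ≤ ‖y‖ := by
      obtain ⟨j, hj⟩ := pow_unbounded_of_one_lt (R / ‖y‖) (by norm_num : (1:ℝ) < 2)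
      refine ⟨j, ?_⟩
      rw [div_le_iff₀ (by positivity)]
      have h2 : (2:ℝ) ^ j ≤ 2 ^ (j + 1) :=
        pow_le_pow_right₀ (by norm_num) (Nat.le_succ j)
      have := (div_lt_iff₀ hypos).mp hj
      nlinarith
    set j := Nat.find hex with hjdef
    have hj1 : R / 2 ^ (j + 1) ≤ ‖y‖ := Nat.find_spec hex
    have hj2 : ‖y‖ < R / 2 ^ j := by
      rcases Nat.eq_zero_or_pos j with hj0 | hj0
      · rw [hj0]; simpa using mem_ball_zero_iff.mp hy
      · have hmin := Nat.find_min hex (m := j - 1) (by omega)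
        push_neg at hmin
        have hlt : ‖y‖ < R / 2 ^ (j - 1 + 1) := hmin
        have hje : j - 1 + 1 = j := Nat.succ_pred_eq_of_pos hj0
        rwa [hje] at hlt
    exact mem_iUnion.mpr ⟨j, mem_ball_zero_iff.mpr hj2,
      by simpa [mem_ball_zero_iff] using not_lt.mpr hj1⟩
  set f : En n → ℝ≥0∞ := fun y => ENNReal.ofReal (c / ‖y‖ ^ k) with hf
  set V : ℝ≥0∞ := volume (ball (0 : En n) 1) with hV
  have hVfin : V < ⊤ := measure_ball_lt_top
  have hmono : ∫⁻ y in ball (0 : En n) R, f y ∂volume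
      ≤ ∫⁻ y in ({0} ∪ ⋃ j, A j : Set (En n)), f y ∂volume := lintegral_mono_set hcover
  have hsingle : ∫⁻ y in ({0} : Set (En n)), f y ∂volume = 0 := by
    rw [Measure.restrict_eq_zero.mpr (measure_singleton 0)]
    simp
  set D : ℝ := c * 2 ^ k * R ^ m with hD
  set r : ℝ≥0∞ := ENNReal.ofReal ((1:ℝ) / 2 ^ m) with hr
  have hAj : ∀ j : ℕ, ∫⁻ y in A j, f y ∂volume ≤ ENNReal.ofReal D * V * r ^ j := by
    intro j
    have haj : (0:ℝ) < R / 2 ^ j := by positivity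
    have hpos : (0:ℝ) < R / 2 ^ (j + 1) := by positivity
    set b : ℝ := c / (R / 2 ^ (j + 1)) ^ k with hb
    have hbnn : 0 ≤ b := div_nonneg hc (by positivity)
    have hDnn : 0 ≤ D := mul_nonneg (mul_nonneg hc (by positivity)) (by positivity)
    have hbd : ∀ y ∈ A j, f y ≤ ENNReal.ofReal b := by
      intro y hy
      have h1 : R / 2 ^ (j + 1) ≤ ‖y‖ := not_lt.mp (fun h => hy.2 (mem_ball_zero_iff.mpr h))
      exact ENNReal.ofReal_le_ofReal
        (div_le_div_of_nonneg_left hc (by positivity) (pow_le_pow_left₀ hpos.le h1 k))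
    have hstep : ∫⁻ y in A j, f y ∂volume ≤ ENNReal.ofReal b * volume (A j) := by
      calc ∫⁻ y in A j, f y ∂volume
          ≤ ∫⁻ _ in A j, ENNReal.ofReal b ∂volume := by
            apply setLIntegral_mono' (measurableSet_ball.diff measurableSet_ball) hbd
        _ = ENNReal.ofReal b * volume (A j) := by rw [setLIntegral_const]
    have hvolA : volume (A j) ≤ ENNReal.ofReal ((R / 2 ^ j) ^ n) * V := by
      calc volume (A j) ≤ volume (ball (0 : En n) (R / 2 ^ j)) := measure_mono diff_subset
        _ = ENNReal.ofReal ((R / 2 ^ j) ^ n) * V := by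
            rw [Measure.addHaar_ball _ _ haj.le, finrank_euclideanSpace_fin]
    have hkey : b * (R / 2 ^ j) ^ n = D * ((1:ℝ) / 2 ^ m) ^ j := by
      have e2 : ((2:ℝ) ^ j) ^ m = ((2:ℝ) ^ m) ^ j := by
        rw [← pow_mul, ← pow_mul, Nat.mul_comm]
      have e3 : (R / 2 ^ j) ^ m = R ^ m * ((1:ℝ) / 2 ^ m) ^ j := by
        rw [div_pow, e2, div_pow, one_pow]
        ring
      rw [hb, hD, hm]
      rw [show (R / 2 ^ j : ℝ) ^ (k + m) = (R / 2 ^ j) ^ k * (R / 2 ^ j) ^ m from pow_add _ _ _]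
      rw [show R / 2 ^ (j + 1) = (R / 2 ^ j) / 2 from by rw [pow_succ]; ring]
      rw [div_pow (R / 2 ^ j) 2 k, e3]
      have hk0 : ((R / 2 ^ j : ℝ)) ^ k ≠ 0 := by positivity
      field_simp
    calc ∫⁻ y in A j, f y ∂volume
        ≤ ENNReal.ofReal b * (ENNReal.ofReal ((R / 2 ^ j) ^ n) * V) :=
          hstep.trans (mul_le_mul_right hvolA _)
      _ = ENNReal.ofReal (b * (R / 2 ^ j) ^ n) * V := by
          rw [← mul_assoc, ← ENNReal.ofReal_mul hbnn]
      _ = ENNReal.ofReal D * V * r ^ j := by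
          rw [hkey, ENNReal.ofReal_mul hDnn, hr,
            ENNReal.ofReal_pow (by positivity : (0:ℝ) ≤ 1 / 2 ^ m), mul_right_comm]
  have hr1 : r < 1 := by
    rw [hr]
    apply ENNReal.ofReal_lt_one.mpr
    rw [div_lt_one (by positivity)]
    have h2m : (2:ℝ) ≤ 2 ^ m := le_self_pow₀ one_le_two (by omega)
    linarith
  have hsum : ∫⁻ y in (⋃ j, A j : Set (En n)), f y ∂volume
      ≤ ENNReal.ofReal D * V * (1 - r)⁻¹ := by
    calc ∫⁻ y in (⋃ j, A j : Set (En n)), f y ∂volume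
        ≤ ∑' j, ∫⁻ y in A j, f y ∂volume := lintegral_iUnion_le _ _
      _ ≤ ∑' j, ENNReal.ofReal D * V * r ^ j := ENNReal.tsum_le_tsum hAj
      _ = ENNReal.ofReal D * V * ∑' j, r ^ j := ENNReal.tsum_mul_left
      _ = ENNReal.ofReal D * V * (1 - r)⁻¹ := by rw [ENNReal.tsum_geometric]
  have hfin : ENNReal.ofReal D * V * (1 - r)⁻¹ < ⊤ := by
    apply ENNReal.mul_lt_top
    · exact ENNReal.mul_lt_top ENNReal.ofReal_lt_top hVfin
    · rw [ENNReal.inv_lt_top]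
      exact tsub_pos_of_lt hr1
  calc ∫⁻ y in ball (0 : En n) R, f y ∂volume
      ≤ ∫⁻ y in ({0} ∪ ⋃ j, A j : Set (En n)), f y ∂volume := hmono
    _ ≤ ∫⁻ y in ({0} : Set (En n)), f y ∂volume
        + ∫⁻ y in (⋃ j, A j : Set (En n)), f y ∂volume := lintegral_union_le _ _ _
    _ = ∫⁻ y in (⋃ j, A j : Set (En n)), f y ∂volume := by rw [hsingle, zero_add]
    _ ≤ ENNReal.ofReal D * V * (1 - r)⁻¹ := hsum
    _ < ⊤ := hfin

lemma ptbd (n : ℕ) (hn : 3 ≤ n) (x y : En n) (hx : ‖x‖ < 1) (hy : ‖y‖ < 1) (hyx : y ≠ x) :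
    1 / (‖y‖ ^ (n - 2) * qbracket x y ^ 2)
      ≤ 4 / ‖y‖ ^ (n - 2) + 2 ^ (n - 2) / ‖y - x‖ ^ 2 := by
  set k : ℕ := n - 2 with hk
  have hk1 : 1 ≤ k := by omega
  have hxn := norm_nonneg x
  have hyn := norm_nonneg y
  have hprod : (0:ℝ) ≤ (1 - ‖y‖ ^ 2) * (1 - ‖x‖ ^ 2) :=
    mul_nonneg (by nlinarith) (by nlinarith)
  have harg : (0:ℝ) ≤ ‖y - x‖ ^ 2 + (1 - ‖y‖ ^ 2) * (1 - ‖x‖ ^ 2) :=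
    add_nonneg (sq_nonneg _) hprod
  have hq2 : qbracket x y ^ 2 = ‖y - x‖ ^ 2 + (1 - ‖y‖ ^ 2) * (1 - ‖x‖ ^ 2) :=
    Real.sq_sqrt harg
  have hd : 0 < ‖y - x‖ := by rw [norm_pos_iff]; exact sub_ne_zero.mpr hyx
  have hqd : ‖y - x‖ ^ 2 ≤ qbracket x y ^ 2 := by rw [hq2]; linarith
  have hq1y : (1 - ‖y‖) ^ 2 ≤ qbracket x y ^ 2 := by
    have hexp : ‖y - x‖ ^ 2 = ‖y‖ ^ 2 - 2 * inner ℝ y x + ‖x‖ ^ 2 := norm_sub_sq_real y x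
    have hip : (inner ℝ y x : ℝ) ≤ ‖y‖ * ‖x‖ := real_inner_le_norm y x
    rw [hq2, hexp]
    nlinarith [mul_nonneg (mul_nonneg (sub_nonneg.mpr hx.le) hyn)
      (show (0:ℝ) ≤ 2 - ‖y‖ * (1 + ‖x‖) by nlinarith)]
  by_cases hy0 : y = 0
  · subst hy0
    rw [norm_zero, zero_pow (by omega : k ≠ 0)]
    simp only [zero_mul, div_zero, zero_add]
    positivity
  · have hay : 0 < ‖y‖ := norm_pos_iff.mpr hy0
    rcases le_or_gt ‖y‖ (1/2) with h12 | h12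
    · have hq4 : (1:ℝ)/4 ≤ qbracket x y ^ 2 := by nlinarith
      have hmain : 1 / (‖y‖ ^ k * qbracket x y ^ 2) ≤ 4 / ‖y‖ ^ k := by
        rw [div_le_div_iff₀ (by positivity) (by positivity)]
        have := mul_le_mul_of_nonneg_left hq4 (le_of_lt (pow_pos hay k))
        linarith
      have h2 : (0:ℝ) ≤ 2 ^ k / ‖y - x‖ ^ 2 := by positivity
      linarith
    · have hq : (0:ℝ) < qbracket x y ^ 2 := lt_of_lt_of_le (by positivity) hqd
      have h1 : ((1:ℝ)/2) ^ k * ‖y - x‖ ^ 2 ≤ ‖y‖ ^ k * qbracket x y ^ 2 :=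
        mul_le_mul (pow_le_pow_left₀ (by norm_num) h12.le k) hqd (sq_nonneg _) (by positivity)
      have h2 : 1 / (‖y‖ ^ k * qbracket x y ^ 2) ≤ 1 / (((1:ℝ)/2) ^ k * ‖y - x‖ ^ 2) :=
        one_div_le_one_div_of_le (by positivity) h1
      have h3 : 1 / (((1:ℝ)/2) ^ k * ‖y - x‖ ^ 2) = 2 ^ k / ‖y - x‖ ^ 2 := by
        rw [div_pow, one_pow]
        field_simp
      have h4 : (0:ℝ) ≤ 4 / ‖y‖ ^ k := by positivity
      linarith [h2.trans_eq h3]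

/-- uniform bound for `J_n(x) = ∫_{𝔹ⁿ} dν(y)/(|y|^{n-2}[x,y]²)`. -/
theorem stmt_15 (n : ℕ) (hn : 3 ≤ n) :
    ∃ μ₅ : ℝ, ∀ x ∈ ball (0 : En n) 1,
      ∫⁻ y in ball (0 : En n) 1,
          ENNReal.ofReal (1 / (‖y‖ ^ (n - 2) * qbracket x y ^ 2)) ∂(nuMeasure n)
        ≤ ENNReal.ofReal μ₅ := by
  classical
  haveI : Nontrivial (En n) := by
    apply Module.nontrivial_of_finrank_pos (R := ℝ) (M := En n)
    rw [finrank_euclideanSpace_fin]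
    omega
  set V : ℝ≥0∞ := volume (ball (0 : En n) 1) with hV
  have hV0 : V ≠ 0 := (measure_ball_pos volume (0 : En n) one_pos).ne'
  set g1 : En n → ℝ≥0∞ := fun y => ENNReal.ofReal (4 / ‖y‖ ^ (n - 2)) with hg1
  have hg1m : Measurable g1 :=
    (measurable_const.div (measurable_norm.pow_const _)).ennreal_ofReal
  set I1 : ℝ≥0∞ := ∫⁻ y in ball (0 : En n) 1, g1 y ∂volume with hI1def
  set I2 : ℝ≥0∞ :=
    ∫⁻ z in ball (0 : En n) 2, ENNReal.ofReal ((2:ℝ) ^ (n - 2) / ‖z‖ ^ 2) ∂volume with hI2def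
  have hI1 : I1 < ⊤ := lemA n (n - 2) (by omega) 1 one_pos 4 (by norm_num)
  have hI2 : I2 < ⊤ := lemA n 2 (by omega) 2 two_pos ((2:ℝ) ^ (n - 2)) (by positivity)
  set C : ℝ≥0∞ := V⁻¹ * (I1 + I2) with hC
  have hCne : C ≠ ⊤ :=
    ENNReal.mul_ne_top (ENNReal.inv_ne_top.mpr hV0) (ENNReal.add_lt_top.mpr ⟨hI1, hI2⟩).ne
  refine ⟨C.toReal, fun x hx => ?_⟩
  rw [ENNReal.ofReal_toReal hCne]
  have hxn : ‖x‖ < 1 := mem_ball_zero_iff.mp hx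
  set g2 : En n → ℝ≥0∞ := fun y => ENNReal.ofReal ((2:ℝ) ^ (n - 2) / ‖y - x‖ ^ 2) with hg2
  set f : En n → ℝ≥0∞ :=
    fun y => ENNReal.ofReal (1 / (‖y‖ ^ (n - 2) * qbracket x y ^ 2)) with hf
  have hmeas : nuMeasure n = V⁻¹ • (volume : Measure (En n)) := rfl
  have hstep0 : ∫⁻ y in ball (0 : En n) 1, f y ∂(nuMeasure n)
      = V⁻¹ * ∫⁻ y in ball (0 : En n) 1, f y ∂volume := by
    rw [hmeas, Measure.restrict_smul, lintegral_smul_measure, smul_eq_mul]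
  have hae : ∀ᵐ y ∂(volume.restrict (ball (0 : En n) 1)), f y ≤ g1 y + g2 y := by
    have hne : ∀ᵐ (y : En n) ∂(volume : Measure (En n)), y ≠ x := by
      refine ae_iff.mpr ?_
      have : {y : En n | ¬ y ≠ x} = {x} := by ext y; simp
      rw [this]
      exact measure_singleton x
    filter_upwards [ae_restrict_mem measurableSet_ball, ae_restrict_of_ae hne] with y hy hyx
    have hyn : ‖y‖ < 1 := mem_ball_zero_iff.mp hy
    calc f y ≤ ENNReal.ofReal (4 / ‖y‖ ^ (n - 2) + 2 ^ (n - 2) / ‖y - x‖ ^ 2) :=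
          ENNReal.ofReal_le_ofReal (ptbd n hn x y hxn hyn hyx)
      _ ≤ g1 y + g2 y := ENNReal.ofReal_add_le
  have hsub : ball (0 : En n) 1 ⊆ ball x 2 := by
    intro y hy
    have : ‖y‖ < 1 := mem_ball_zero_iff.mp hy
    rw [mem_ball, dist_eq_norm]
    calc ‖y - x‖ ≤ ‖y‖ + ‖x‖ := norm_sub_le y x
      _ < 2 := by linarith
  have htrans : ∫⁻ y in ball x 2, g2 y ∂volume = I2 := by
    have hpre : (fun z : En n => z + x) ⁻¹' ball x 2 = ball (0 : En n) 2 := by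
      ext z
      simp [mem_ball, dist_eq_norm]
    have := (measurePreserving_add_right (volume : Measure (En n)) x).setLIntegral_comp_preimage_emb
      (MeasurableEquiv.addRight x).measurableEmbedding g2 (ball x 2)
    rw [hpre] at this
    rw [← this, hI2def]
    apply lintegral_congr
    intro z
    simp [hg2]
  calc ∫⁻ y in ball (0 : En n) 1, f y ∂(nuMeasure n)
      = V⁻¹ * ∫⁻ y in ball (0 : En n) 1, f y ∂volume := hstep0
    _ ≤ V⁻¹ * (I1 + I2) := by
        apply mul_le_mul_right
        calc ∫⁻ y in ball (0 : En n) 1, f y ∂volume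
            ≤ ∫⁻ y in ball (0 : En n) 1, (g1 y + g2 y) ∂volume := lintegral_mono_ae hae
          _ = I1 + ∫⁻ y in ball (0 : En n) 1, g2 y ∂volume := by
              rw [lintegral_add_left hg1m]
          _ ≤ I1 + ∫⁻ y in ball x 2, g2 y ∂volume :=
              add_le_add_right (lintegral_mono_set hsub) _
          _ = I1 + I2 := by rw [htrans]
end

section
/- Let n ≥ 3 and let ψ ∈ C(𝔹ⁿ,ℝⁿ) satisfy |ψ(x)| ≤ M(1−|x|²) for all x ∈ 𝔹ⁿ, where M ≥ 0 is a constant. Then there exists a constant β₁ depending only on n and M such that for every x ∈ 𝔹ⁿ and every k ∈ {1,…,n}, ∫_{𝔹ⁿ} | (∂G_h/∂x_k)(x,y) | · |ψ(y)| dτ(y) ≤ β₁, where for x ≠ y, (∂G_h/∂x_k)(x,y) = −(x_k−y_k)(1−|x|²)^{n−1}(1−|y|²)^{n−1} / ( n |x−y|ⁿ [x,y]ⁿ ) − x_k (1−|x|²)^{n−2}(1−|y|²)^{n−1} / ( n |x−y|^{n−2} [x,y]ⁿ ). -/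
open MeasureTheory Metric Set

noncomputable section

/-- The partial derivative `∂G_h/∂x_k` of the hyperbolic Green function (explicit formula). -/
def dGh (n : ℕ) (k : Fin n) (x y : En n) : ℝ :=
  -((x k - y k) * (1 - ‖x‖ ^ 2) ^ (n - 1) * (1 - ‖y‖ ^ 2) ^ (n - 1))
      / ((n : ℝ) * ‖x - y‖ ^ n * qbracket x y ^ n)
    - x k * (1 - ‖x‖ ^ 2) ^ (n - 2) * (1 - ‖y‖ ^ 2) ^ (n - 1)
      / ((n : ℝ) * ‖x - y‖ ^ (n - 2) * qbracket x y ^ n)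

end

section stmt16aux
open scoped ENNReal NNReal

lemma en_nontrivial {n : ℕ} (hn : 0 < n) : Nontrivial (En n) := by
  haveI : Nonempty (Fin n) := Fin.pos_iff_nonempty.mp hn
  infer_instance

lemma geom_sum_le {w : ℝ} (hw : w ≤ 2⁻¹) :
    (∑' j : ℕ, (ENNReal.ofReal w) ^ j) ≤ 2 := by
  rw [ENNReal.tsum_geometric]
  have h1 : ENNReal.ofReal w ≤ 2⁻¹ := by
    refine le_trans (ENNReal.ofReal_le_ofReal hw) ?_
    rw [← ENNReal.ofReal_ofNat 2, ← ENNReal.ofReal_inv_of_pos (by norm_num)]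
  have h2 : (2 : ℝ≥0∞)⁻¹ ≤ 1 - ENNReal.ofReal w := by
    calc (2:ℝ≥0∞)⁻¹ = 1 - 2⁻¹ := ENNReal.one_sub_inv_two.symm
      _ ≤ 1 - ENNReal.ofReal w := tsub_le_tsub_left h1 1
  calc (1 - ENNReal.ofReal w)⁻¹ ≤ (2⁻¹ : ℝ≥0∞)⁻¹ := ENNReal.inv_le_inv' h2
    _ = 2 := by simp

lemma lint_ball_inv_pow {n : ℕ} (x : En n) {p : ℕ} (hp : p < n) {δ : ℝ} (hδ : 0 < δ) :
    ∫⁻ z in ball x δ, ENNReal.ofReal ((‖z - x‖ ^ p)⁻¹) ∂volume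
      ≤ ENNReal.ofReal (2 ^ (p + 1) * δ ^ (n - p)) * volume (ball (0 : En n) 1) := by
  haveI : Nontrivial (En n) := en_nontrivial (by omega)
  have hfin : Module.finrank ℝ (En n) = n := finrank_euclideanSpace_fin
  obtain ⟨d, hd, rfl⟩ : ∃ d, 0 < d ∧ n = d + p := ⟨n - p, by omega, by omega⟩
  rw [show d + p - p = d from by omega]
  set B1 := volume (ball (0 : En (d + p)) 1) with hB1
  set r : ℕ → ℝ := fun j => δ * (2⁻¹ : ℝ) ^ j with hr
  have hrpos : ∀ j, 0 < r j := fun j => by positivity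
  have hrsucc : ∀ j, r (j + 1) = r j * 2⁻¹ := fun j => by simp only [hr]; ring
  set S : ℕ → Set (En (d + p)) := fun j => ball x (r j) \ ball x (r (j + 1)) with hS
  have cover : ball x δ ⊆ {x} ∪ ⋃ j, S j := by
    intro z hz
    rcases eq_or_ne z x with rfl | hzx
    · exact Or.inl rfl
    have ht : 0 < dist z x := dist_pos.mpr hzx
    have hlt : dist z x < δ := mem_ball.mp hz
    have hex : ∃ j, r j ≤ dist z x := by
      obtain ⟨j, hj⟩ := exists_pow_lt_of_lt_one (div_pos ht hδ) (by norm_num : (2⁻¹ : ℝ) < 1)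
      have hj' := (lt_div_iff₀ hδ).mp hj
      exact ⟨j, by rw [hr]; nlinarith⟩
    have hN0 : Nat.find hex ≠ 0 := by
      intro h0
      have := Nat.find_spec hex
      rw [h0] at this
      simp [hr] at this
      linarith
    obtain ⟨N, hNe⟩ : ∃ N, Nat.find hex = N + 1 := ⟨Nat.find hex - 1, by omega⟩
    refine Or.inr (mem_iUnion.mpr ⟨N, ?_, ?_⟩)
    · have := Nat.find_min hex (by omega : N < Nat.find hex)
      exact mem_ball.mpr (by push_neg at this; linarith)
    · intro hmem
      have := Nat.find_spec hex
      rw [hNe] at this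
      exact absurd (mem_ball.mp hmem) (not_lt.mpr this)
  calc ∫⁻ z in ball x δ, ENNReal.ofReal ((‖z - x‖ ^ p)⁻¹) ∂volume
      ≤ ∫⁻ z in {x} ∪ ⋃ j, S j, ENNReal.ofReal ((‖z - x‖ ^ p)⁻¹) ∂volume :=
        lintegral_mono_set cover
    _ ≤ (∫⁻ z in {x}, ENNReal.ofReal ((‖z - x‖ ^ p)⁻¹) ∂volume)
        + ∫⁻ z in ⋃ j, S j, ENNReal.ofReal ((‖z - x‖ ^ p)⁻¹) ∂volume :=
        lintegral_union_le _ _ _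
    _ ≤ 0 + ∑' j, ∫⁻ z in S j, ENNReal.ofReal ((‖z - x‖ ^ p)⁻¹) ∂volume := by
        gcongr
        · exact le_of_eq (setLIntegral_measure_zero _ _ (measure_singleton x))
        · exact lintegral_iUnion_le _ _
    _ ≤ ∑' j, (ENNReal.ofReal (2 ^ p * δ ^ d) * B1) * (ENNReal.ofReal ((2⁻¹:ℝ) ^ d)) ^ j := by
        rw [zero_add]
        refine ENNReal.tsum_le_tsum fun j => ?_
        have hstep : ∫⁻ z in S j, ENNReal.ofReal ((‖z - x‖ ^ p)⁻¹) ∂volume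
            ≤ ENNReal.ofReal ((r (j+1) ^ p)⁻¹) * volume (S j) := by
          rw [← setLIntegral_const (S j) _]
          refine setLIntegral_mono measurable_const fun z hz => ?_
          have h1 : r (j + 1) ≤ ‖z - x‖ := by
            have := hz.2
            rw [mem_ball, not_lt] at this
            simpa [dist_eq_norm] using this
          refine ENNReal.ofReal_le_ofReal ?_
          exact inv_anti₀ (by positivity) (pow_le_pow_left₀ (hrpos _).le h1 p)
        refine hstep.trans ?_
        have hvol : volume (S j) ≤ ENNReal.ofReal (r j ^ (d + p)) * B1 := by
          refine le_trans (measure_mono diff_subset) ?_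
          rw [Measure.addHaar_ball volume x (hrpos j).le, hfin]
        calc ENNReal.ofReal ((r (j+1) ^ p)⁻¹) * volume (S j)
            ≤ ENNReal.ofReal ((r (j+1) ^ p)⁻¹) * (ENNReal.ofReal (r j ^ (d + p)) * B1) := by gcongr
          _ = ENNReal.ofReal ((r (j+1) ^ p)⁻¹ * r j ^ (d + p)) * B1 := by
              rw [ENNReal.ofReal_mul (by positivity), mul_assoc]
          _ = (ENNReal.ofReal (2 ^ p * δ ^ d) * B1) * (ENNReal.ofReal ((2⁻¹:ℝ) ^ d)) ^ j := by
              rw [← ENNReal.ofReal_pow (by positivity), mul_right_comm,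
                ← ENNReal.ofReal_mul (by positivity)]
              congr 2
              have hA : (0:ℝ) < (2⁻¹:ℝ) ^ j := by positivity
              rw [hrsucc j, ← pow_mul]
              simp only [hr]
              have h1 : (δ * 2⁻¹ ^ j * 2⁻¹ : ℝ) ^ p ≠ 0 := by positivity
              field_simp
              rw [div_pow (δ * (1 / 2) ^ j) 2 p, div_mul_cancel₀ _ (by positivity)]; ring
    _ = (ENNReal.ofReal (2 ^ p * δ ^ d) * B1) * ∑' j, (ENNReal.ofReal ((2⁻¹:ℝ) ^ d)) ^ j :=
        ENNReal.tsum_mul_left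
    _ ≤ (ENNReal.ofReal (2 ^ p * δ ^ d) * B1) * 2 := by
        gcongr
        refine geom_sum_le ?_
        calc ((2:ℝ)⁻¹) ^ d ≤ (2⁻¹:ℝ) ^ 1 := pow_le_pow_of_le_one (by norm_num) (by norm_num) hd
          _ = 2⁻¹ := pow_one _
    _ = ENNReal.ofReal (2 ^ (p + 1) * δ ^ d) * B1 := by
        rw [mul_right_comm]
        congr 1
        rw [← ENNReal.ofReal_ofNat 2, ← ENNReal.ofReal_mul (by positivity)]
        congr 1
        ring

lemma lint_compl_inv_pow {n : ℕ} (hn : 0 < n) (x : En n) {δ : ℝ} (hδ : 0 < δ) :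
    ∫⁻ z in (ball x δ)ᶜ, ENNReal.ofReal ((‖z - x‖ ^ (n + 1))⁻¹) ∂volume
      ≤ ENNReal.ofReal (2 ^ (n + 1) * δ⁻¹) * volume (ball (0 : En n) 1) := by
  haveI : Nontrivial (En n) := en_nontrivial hn
  have hfin : Module.finrank ℝ (En n) = n := finrank_euclideanSpace_fin
  set B1 := volume (ball (0 : En n) 1) with hB1
  set r : ℕ → ℝ := fun j => δ * (2 : ℝ) ^ j with hr
  have hrpos : ∀ j, 0 < r j := fun j => by positivity
  have hrsucc : ∀ j, r (j + 1) = r j * 2 := fun j => by simp only [hr]; ring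
  set S : ℕ → Set (En n) := fun j => ball x (r (j + 1)) \ ball x (r j) with hS
  have cover : (ball x δ)ᶜ ⊆ ⋃ j, S j := by
    intro z hz
    have hge : δ ≤ dist z x := by
      rw [mem_compl_iff, mem_ball, not_lt] at hz; exact hz
    have hex : ∃ j, dist z x < r j := by
      obtain ⟨j, hj⟩ := pow_unbounded_of_one_lt (dist z x / δ) (by norm_num : (1:ℝ) < 2)
      have hj' := (div_lt_iff₀ hδ).mp hj
      exact ⟨j, by simp only [hr]; rw [mul_comm]; exact hj'⟩
    have hN0 : Nat.find hex ≠ 0 := by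
      intro h0
      have := Nat.find_spec hex
      rw [h0] at this
      simp [hr] at this
      linarith
    obtain ⟨N, hNe⟩ : ∃ N, Nat.find hex = N + 1 := ⟨Nat.find hex - 1, by omega⟩
    refine mem_iUnion.mpr ⟨N, ?_, ?_⟩
    · have := Nat.find_spec hex
      rw [hNe] at this
      exact mem_ball.mpr this
    · intro hmem
      have := Nat.find_min hex (by omega : N < Nat.find hex)
      exact this (mem_ball.mp hmem)
  calc ∫⁻ z in (ball x δ)ᶜ, ENNReal.ofReal ((‖z - x‖ ^ (n + 1))⁻¹) ∂volume
      ≤ ∫⁻ z in ⋃ j, S j, ENNReal.ofReal ((‖z - x‖ ^ (n + 1))⁻¹) ∂volume :=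
        lintegral_mono_set cover
    _ ≤ ∑' j, ∫⁻ z in S j, ENNReal.ofReal ((‖z - x‖ ^ (n + 1))⁻¹) ∂volume :=
        lintegral_iUnion_le _ _
    _ ≤ ∑' j, (ENNReal.ofReal (2 ^ n * δ⁻¹) * B1) * (ENNReal.ofReal ((2⁻¹:ℝ))) ^ j := by
        refine ENNReal.tsum_le_tsum fun j => ?_
        have hstep : ∫⁻ z in S j, ENNReal.ofReal ((‖z - x‖ ^ (n + 1))⁻¹) ∂volume
            ≤ ENNReal.ofReal ((r j ^ (n + 1))⁻¹) * volume (S j) := by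
          rw [← setLIntegral_const (S j) _]
          refine setLIntegral_mono measurable_const fun z hz => ?_
          have h1 : r j ≤ ‖z - x‖ := by
            have := hz.2
            rw [mem_ball, not_lt] at this
            simpa [dist_eq_norm] using this
          refine ENNReal.ofReal_le_ofReal ?_
          exact inv_anti₀ (by positivity) (pow_le_pow_left₀ (hrpos _).le h1 (n + 1))
        refine hstep.trans ?_
        have hvol : volume (S j) ≤ ENNReal.ofReal (r (j + 1) ^ n) * B1 := by
          refine le_trans (measure_mono diff_subset) ?_
          rw [Measure.addHaar_ball volume x (hrpos (j + 1)).le, hfin]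
        calc ENNReal.ofReal ((r j ^ (n + 1))⁻¹) * volume (S j)
            ≤ ENNReal.ofReal ((r j ^ (n + 1))⁻¹) * (ENNReal.ofReal (r (j + 1) ^ n) * B1) := by
              gcongr
          _ = ENNReal.ofReal ((r j ^ (n + 1))⁻¹ * r (j + 1) ^ n) * B1 := by
              rw [ENNReal.ofReal_mul (by positivity), mul_assoc]
          _ = (ENNReal.ofReal (2 ^ n * δ⁻¹) * B1) * (ENNReal.ofReal ((2⁻¹:ℝ))) ^ j := by
              rw [← ENNReal.ofReal_pow (by positivity), mul_right_comm,
                ← ENNReal.ofReal_mul (by positivity)]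
              congr 2
              rw [hrsucc j]
              simp only [hr]
              have h1 : (δ * (2:ℝ) ^ j) ^ (n + 1) ≠ 0 := by positivity
              field_simp
              have h2 : (1/2:ℝ)^j * 2^j = 1 := by rw [← mul_pow]; norm_num
              linear_combination (-(δ^(n+1)*2^(j*n)*2^n)) * h2
    _ = (ENNReal.ofReal (2 ^ n * δ⁻¹) * B1) * ∑' j, (ENNReal.ofReal ((2⁻¹:ℝ))) ^ j :=
        ENNReal.tsum_mul_left
    _ ≤ (ENNReal.ofReal (2 ^ n * δ⁻¹) * B1) * 2 := by
        gcongr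
        exact geom_sum_le le_rfl
    _ = ENNReal.ofReal (2 ^ (n + 1) * δ⁻¹) * B1 := by
        rw [mul_right_comm]
        congr 1
        rw [← ENNReal.ofReal_ofNat 2, ← ENNReal.ofReal_mul (by positivity)]
        congr 1
        ring

lemma abs_coord_le_norm {n : ℕ} (v : En n) (k : Fin n) : |v k| ≤ ‖v‖ := by
  rw [EuclideanSpace.norm_eq]
  rw [show |v k| = Real.sqrt (|v k| ^ 2) from (Real.sqrt_sq (abs_nonneg _)).symm]
  apply Real.sqrt_le_sqrt
  calc |v k| ^ 2 = ‖v k‖ ^ 2 := by rw [Real.norm_eq_abs]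
    _ ≤ ∑ i, ‖v i‖ ^ 2 :=
      Finset.single_le_sum (f := fun i => ‖v i‖ ^ 2) (fun i _ => by positivity)
        (Finset.mem_univ k)

lemma qbracket_sq {n : ℕ} (x y : En n) (hx : ‖x‖ < 1) (hy : ‖y‖ < 1) :
    qbracket x y ^ 2 = ‖y - x‖ ^ 2 + (1 - ‖y‖ ^ 2) * (1 - ‖x‖ ^ 2) := by
  rw [qbracket, Real.sq_sqrt]
  have h1 : 0 ≤ 1 - ‖y‖ ^ 2 := by nlinarith [norm_nonneg y]
  have h2 : 0 ≤ 1 - ‖x‖ ^ 2 := by nlinarith [norm_nonneg x]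
  positivity

lemma norm_sub_le_qbracket {n : ℕ} (x y : En n) (hx : ‖x‖ < 1) (hy : ‖y‖ < 1) :
    ‖y - x‖ ≤ qbracket x y := by
  rw [qbracket]
  have h1 : 0 ≤ 1 - ‖y‖ ^ 2 := by nlinarith [norm_nonneg y]
  have h2 : 0 ≤ 1 - ‖x‖ ^ 2 := by nlinarith [norm_nonneg x]
  rw [Real.le_sqrt (norm_nonneg _) (by positivity)]
  nlinarith

lemma half_le_qbracket {n : ℕ} (x y : En n) (hx : ‖x‖ < 1) (hy : ‖y‖ < 1) :
    (1 - ‖x‖ ^ 2) / 2 ≤ qbracket x y := by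
  rw [qbracket]
  have h0 : (0:ℝ) ≤ (1 - ‖x‖ ^ 2) / 2 := by nlinarith [norm_nonneg x]
  have hinn : (inner ℝ y x : ℝ) ≤ ‖y‖ * ‖x‖ := real_inner_le_norm y x
  have hns2 : ‖y - x‖ ^ 2 = ‖y‖ ^ 2 - 2 * (inner ℝ y x : ℝ) + ‖x‖ ^ 2 := norm_sub_sq_real y x
  have h1 : (0:ℝ) ≤ 1 - ‖y‖ ^ 2 := by nlinarith [norm_nonneg y]
  have h2 : (0:ℝ) ≤ 1 - ‖x‖ ^ 2 := by nlinarith [norm_nonneg x]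
  rw [Real.le_sqrt h0 (by nlinarith [sq_nonneg ‖y - x‖, mul_nonneg h1 h2])]
  have h3 : (1 - ‖x‖ ^ 2) / 2 ≤ 1 - ‖x‖ * ‖y‖ := by
    have huv : ‖x‖ * ‖y‖ ≤ ‖x‖ := mul_le_of_le_one_right (norm_nonneg x) hy.le
    nlinarith [sq_nonneg (1 - ‖x‖)]
  have h4 := pow_le_pow_left₀ h0 h3 2
  nlinarith [hinn, hns2, h4]

set_option maxHeartbeats 1600000 in
lemma pointwise_bound {n : ℕ} (hn : 3 ≤ n) {M : ℝ} (hM : 0 ≤ M) {ψ : En n → En n}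
    (hψ : ∀ z ∈ ball (0 : En n) 1, ‖ψ z‖ ≤ M * (1 - ‖z‖ ^ 2))
    {x y : En n} (hx : x ∈ ball (0 : En n) 1) (hy : y ∈ ball (0 : En n) 1) (k : Fin n) :
    ((1 - ‖y‖ ^ 2) ^ n)⁻¹ * (|dGh n k x y| * ‖ψ y‖) ≤
      if ‖y - x‖ < (1 - ‖x‖ ^ 2) / 4 then
        M * 2 ^ n / n *
          ((1 - ‖x‖ ^ 2)⁻¹ * (‖y - x‖ ^ (n - 1))⁻¹
            + ((1 - ‖x‖ ^ 2) ^ 2)⁻¹ * (‖y - x‖ ^ (n - 2))⁻¹)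
      else M * 2 ^ n / n * ((1 - ‖x‖ ^ 2) * (‖y - x‖ ^ (n + 1))⁻¹) := by
  have hψy := hψ y hy
  rw [mem_ball_zero_iff] at hx hy
  obtain ⟨m, rfl⟩ : ∃ m, n = m + 3 := ⟨n - 3, by omega⟩
  rw [show m + 3 - 1 = m + 2 from by omega, show m + 3 - 2 = m + 1 from by omega]
  have ha : (0:ℝ) < 1 - ‖x‖ ^ 2 := by nlinarith [norm_nonneg x]
  have hb : (0:ℝ) < 1 - ‖y‖ ^ 2 := by nlinarith [norm_nonneg y]
  have hψ0 : (0:ℝ) ≤ ‖ψ y‖ := norm_nonneg _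
  set a : ℝ := 1 - ‖x‖ ^ 2 with hadef
  set b : ℝ := 1 - ‖y‖ ^ 2 with hbdef
  set P : ℝ := ‖y - x‖ with hPdef
  have hP0 : 0 ≤ P := norm_nonneg _
  have hPxy : ‖x - y‖ = P := norm_sub_rev x y
  set q : ℝ := qbracket x y with hqdef
  have hqP : P ≤ q := norm_sub_le_qbracket x y hx hy
  have hqa : a / 2 ≤ q := half_le_qbracket x y hx hy
  have hq0 : 0 < q := lt_of_lt_of_le (by linarith) hqa
  set N : ℝ := ((m + 3 : ℕ) : ℝ) with hNdef
  have hN : (0:ℝ) < N := by positivity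
  rcases eq_or_lt_of_le hP0 with hP | hP
  · -- y = x : everything vanishes
    have hd : dGh (m + 3) k x y = 0 := by
      rw [dGh, hPxy, ← hP]
      rw [show m + 3 - 2 = m + 1 from by omega]
      simp [zero_pow]
    rw [hd, abs_zero, zero_mul, mul_zero]
    split_ifs <;> positivity
  · -- main case, P > 0
    have habs : |dGh (m + 3) k x y| ≤
        P * a ^ (m + 2) * b ^ (m + 2) / (N * P ^ (m + 3) * q ^ (m + 3))
          + a ^ (m + 1) * b ^ (m + 2) / (N * P ^ (m + 1) * q ^ (m + 3)) := by
      rw [dGh, hPxy]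
      rw [show m + 3 - 1 = m + 2 from by omega, show m + 3 - 2 = m + 1 from by omega]
      have hD1 : (0:ℝ) < N * P ^ (m + 3) * q ^ (m + 3) := by positivity
      have hD2 : (0:ℝ) < N * P ^ (m + 1) * q ^ (m + 3) := by positivity
      rw [← hqdef, ← hNdef, ← hadef, ← hbdef]
      refine le_trans (abs_sub _ _) ?_
      rw [abs_div, abs_div, abs_neg, abs_of_pos hD1, abs_of_pos hD2]
      have hco1 : |x k - y k| ≤ P := by
        have := abs_coord_le_norm (x - y) k
        rw [hPxy] at this
        simpa [PiLp.sub_apply] using this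
      have hco2 : |x k| ≤ 1 := le_trans (abs_coord_le_norm x k) hx.le
      gcongr
      · calc |(x k - y k) * a ^ (m + 2) * b ^ (m + 2)|
            = |x k - y k| * a ^ (m + 2) * b ^ (m + 2) := by
              rw [abs_mul, abs_mul, abs_of_pos (by positivity : (0:ℝ) < a ^ (m+2)),
                abs_of_pos (by positivity : (0:ℝ) < b ^ (m+2))]
          _ ≤ P * a ^ (m + 2) * b ^ (m + 2) := by gcongr
      · calc |x k * a ^ (m + 1) * b ^ (m + 2)|
            = |x k| * a ^ (m + 1) * b ^ (m + 2) := by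
              rw [abs_mul, abs_mul, abs_of_pos (by positivity : (0:ℝ) < a ^ (m+1)),
                abs_of_pos (by positivity : (0:ℝ) < b ^ (m+2))]
          _ ≤ 1 * a ^ (m + 1) * b ^ (m + 2) := by gcongr
          _ = a ^ (m + 1) * b ^ (m + 2) := by ring
    have hmain : ((1 - ‖y‖ ^ 2) ^ (m + 3))⁻¹ * (|dGh (m + 3) k x y| * ‖ψ y‖) ≤
        M * (a ^ (m + 2) / (N * P ^ (m + 2) * q ^ (m + 3))
          + a ^ (m + 1) / (N * P ^ (m + 1) * q ^ (m + 3))) := by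
      calc ((1 - ‖y‖ ^ 2) ^ (m + 3))⁻¹ * (|dGh (m + 3) k x y| * ‖ψ y‖)
          ≤ (b ^ (m + 3))⁻¹ *
            ((P * a ^ (m + 2) * b ^ (m + 2) / (N * P ^ (m + 3) * q ^ (m + 3))
              + a ^ (m + 1) * b ^ (m + 2) / (N * P ^ (m + 1) * q ^ (m + 3))) * (M * b)) := by
            rw [← hbdef]
            gcongr
        _ = M * (a ^ (m + 2) / (N * P ^ (m + 2) * q ^ (m + 3))
            + a ^ (m + 1) / (N * P ^ (m + 1) * q ^ (m + 3))) := by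
            field_simp
            ring
    refine hmain.trans ?_
    split_ifs with hcase
    · -- near case
      have hkey : a ^ (m + 3) ≤ 2 ^ (m + 3) * q ^ (m + 3) := by
        calc a ^ (m + 3) ≤ (2 * q) ^ (m + 3) :=
            pow_le_pow_left₀ ha.le (by linarith) _
          _ = 2 ^ (m + 3) * q ^ (m + 3) := mul_pow _ _ _
      have h1 : a ^ (m + 2) / (N * P ^ (m + 2) * q ^ (m + 3))
          ≤ 2 ^ (m + 3) / N * (a⁻¹ * (P ^ (m + 2))⁻¹) := by
        rw [show (2:ℝ) ^ (m + 3) / N * (a⁻¹ * (P ^ (m + 2))⁻¹)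
            = 2 ^ (m + 3) / (N * a * P ^ (m + 2)) from by field_simp]
        rw [div_le_div_iff₀ (by positivity) (by positivity)]
        calc a ^ (m + 2) * (N * a * P ^ (m + 2)) = a ^ (m + 3) * (N * P ^ (m + 2)) := by ring
          _ ≤ (2 ^ (m + 3) * q ^ (m + 3)) * (N * P ^ (m + 2)) :=
            mul_le_mul_of_nonneg_right hkey (by positivity)
          _ = 2 ^ (m + 3) * (N * P ^ (m + 2) * q ^ (m + 3)) := by ring
      have h2 : a ^ (m + 1) / (N * P ^ (m + 1) * q ^ (m + 3))
          ≤ 2 ^ (m + 3) / N * ((a ^ 2)⁻¹ * (P ^ (m + 1))⁻¹) := by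
        rw [show (2:ℝ) ^ (m + 3) / N * ((a ^ 2)⁻¹ * (P ^ (m + 1))⁻¹)
            = 2 ^ (m + 3) / (N * a ^ 2 * P ^ (m + 1)) from by field_simp]
        rw [div_le_div_iff₀ (by positivity) (by positivity)]
        calc a ^ (m + 1) * (N * a ^ 2 * P ^ (m + 1)) = a ^ (m + 3) * (N * P ^ (m + 1)) := by ring
          _ ≤ (2 ^ (m + 3) * q ^ (m + 3)) * (N * P ^ (m + 1)) :=
            mul_le_mul_of_nonneg_right hkey (by positivity)
          _ = 2 ^ (m + 3) * (N * P ^ (m + 1) * q ^ (m + 3)) := by ring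
      calc M * (a ^ (m + 2) / (N * P ^ (m + 2) * q ^ (m + 3))
            + a ^ (m + 1) / (N * P ^ (m + 1) * q ^ (m + 3)))
          ≤ M * (2 ^ (m + 3) / N * (a⁻¹ * (P ^ (m + 2))⁻¹)
            + 2 ^ (m + 3) / N * ((a ^ 2)⁻¹ * (P ^ (m + 1))⁻¹)) := by
            have := add_le_add h1 h2
            exact mul_le_mul_of_nonneg_left this hM
        _ = M * 2 ^ (m + 3) / N * (a⁻¹ * (P ^ (m + 2))⁻¹ + (a ^ 2)⁻¹ * (P ^ (m + 1))⁻¹) := by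
            ring
    · -- far case
      push_neg at hcase
      have hkey2 : a ^ (m + 1) * P ^ 2 ≤ 2 ^ (m + 1) * q ^ (m + 3) := by
        have e1 : a ^ (m + 1) ≤ 2 ^ (m + 1) * q ^ (m + 1) := by
          calc a ^ (m + 1) ≤ (2 * q) ^ (m + 1) := pow_le_pow_left₀ ha.le (by linarith) _
            _ = 2 ^ (m + 1) * q ^ (m + 1) := mul_pow _ _ _
        have e2 : P ^ 2 ≤ q ^ 2 := pow_le_pow_left₀ hP0 hqP 2
        calc a ^ (m + 1) * P ^ 2 ≤ (2 ^ (m + 1) * q ^ (m + 1)) * q ^ 2 := by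
              exact mul_le_mul e1 e2 (by positivity) (by positivity)
          _ = 2 ^ (m + 1) * q ^ (m + 3) := by rw [mul_assoc, ← pow_add]
      have hkey3 : a ^ m * P ^ 3 ≤ 2 ^ m * q ^ (m + 3) := by
        have e1 : a ^ m ≤ 2 ^ m * q ^ m := by
          calc a ^ m ≤ (2 * q) ^ m := pow_le_pow_left₀ ha.le (by linarith) _
            _ = 2 ^ m * q ^ m := mul_pow _ _ _
        have e2 : P ^ 3 ≤ q ^ 3 := pow_le_pow_left₀ hP0 hqP 3
        calc a ^ m * P ^ 3 ≤ (2 ^ m * q ^ m) * q ^ 3 := by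
              exact mul_le_mul e1 e2 (by positivity) (by positivity)
          _ = 2 ^ m * q ^ (m + 3) := by rw [mul_assoc, ← pow_add]
      have h1 : a ^ (m + 2) / (N * P ^ (m + 2) * q ^ (m + 3))
          ≤ 2 ^ (m + 2) / N * (a * (P ^ (m + 4))⁻¹) := by
        rw [show (2:ℝ) ^ (m + 2) / N * (a * (P ^ (m + 4))⁻¹)
            = 2 ^ (m + 2) * a / (N * P ^ (m + 4)) from by field_simp]
        rw [div_le_div_iff₀ (by positivity) (by positivity)]
        have hXpos : (0:ℝ) ≤ (2 ^ (m + 1) * q ^ (m + 3)) * (a * N * P ^ (m + 2)) := by positivity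
        calc a ^ (m + 2) * (N * P ^ (m + 4))
            = (a ^ (m + 1) * P ^ 2) * (a * N * P ^ (m + 2)) := by ring
          _ ≤ (2 ^ (m + 1) * q ^ (m + 3)) * (a * N * P ^ (m + 2)) :=
            mul_le_mul_of_nonneg_right hkey2 (by positivity)
          _ ≤ 2 ^ (m + 2) * a * (N * P ^ (m + 2) * q ^ (m + 3)) := by
            have hrr : (2:ℝ) ^ (m + 2) * a * (N * P ^ (m + 2) * q ^ (m + 3))
                = 2 * ((2 ^ (m + 1) * q ^ (m + 3)) * (a * N * P ^ (m + 2))) := by ring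
            linarith [hXpos]
      have h2 : a ^ (m + 1) / (N * P ^ (m + 1) * q ^ (m + 3))
          ≤ 2 ^ (m + 2) / N * (a * (P ^ (m + 4))⁻¹) := by
        rw [show (2:ℝ) ^ (m + 2) / N * (a * (P ^ (m + 4))⁻¹)
            = 2 ^ (m + 2) * a / (N * P ^ (m + 4)) from by field_simp]
        rw [div_le_div_iff₀ (by positivity) (by positivity)]
        have hXpos : (0:ℝ) ≤ (2 ^ m * q ^ (m + 3)) * (a * N * P ^ (m + 1)) := by positivity
        calc a ^ (m + 1) * (N * P ^ (m + 4))
            = (a ^ m * P ^ 3) * (a * N * P ^ (m + 1)) := by ring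
          _ ≤ (2 ^ m * q ^ (m + 3)) * (a * N * P ^ (m + 1)) :=
            mul_le_mul_of_nonneg_right hkey3 (by positivity)
          _ ≤ 2 ^ (m + 2) * a * (N * P ^ (m + 1) * q ^ (m + 3)) := by
            have hrr : (2:ℝ) ^ (m + 2) * a * (N * P ^ (m + 1) * q ^ (m + 3))
                = 4 * ((2 ^ m * q ^ (m + 3)) * (a * N * P ^ (m + 1))) := by ring
            linarith [hXpos]
      calc M * (a ^ (m + 2) / (N * P ^ (m + 2) * q ^ (m + 3))
            + a ^ (m + 1) / (N * P ^ (m + 1) * q ^ (m + 3)))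
          ≤ M * (2 ^ (m + 2) / N * (a * (P ^ (m + 4))⁻¹)
            + 2 ^ (m + 2) / N * (a * (P ^ (m + 4))⁻¹)) := by
            have := add_le_add h1 h2
            exact mul_le_mul_of_nonneg_left this hM
        _ = M * 2 ^ (m + 3) / N * (a * (P ^ (m + 4))⁻¹) := by ring

end stmt16aux

/-- uniform bound `∫_{𝔹ⁿ} |∂G_h/∂x_k(x,y)| |ψ(y)| dτ(y) ≤ β₁`. -/
theorem stmt_16 (n : ℕ) (hn : 3 ≤ n) (M : ℝ) (hM : 0 ≤ M) :
    ∃ β₁ : ℝ, ∀ ψ : En n → En n,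
      ContinuousOn ψ (ball (0 : En n) 1) →
      (∀ x ∈ ball (0 : En n) 1, ‖ψ x‖ ≤ M * (1 - ‖x‖ ^ 2)) →
      ∀ x ∈ ball (0 : En n) 1, ∀ k : Fin n,
        ∫⁻ y in ball (0 : En n) 1,
            ENNReal.ofReal (|dGh n k x y| * ‖ψ y‖) ∂(tauMeasure n)
          ≤ ENNReal.ofReal β₁ := by
  classical
  have hn0 : 0 < n := by omega
  haveI : Nontrivial (En n) := en_nontrivial hn0
  refine ⟨M * 2 ^ n / n * 2 ^ (n + 5), fun ψ hψc hψ x hxmem k => ?_⟩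
  set c := volume (ball (0 : En n) 1) with hc
  have hc0 : c ≠ 0 := (measure_ball_pos volume 0 one_pos).ne'
  have hctop : c ≠ ⊤ := measure_ball_lt_top.ne
  have hx : ‖x‖ < 1 := mem_ball_zero_iff.mp hxmem
  have ha : (0:ℝ) < 1 - ‖x‖ ^ 2 := by nlinarith [norm_nonneg x]
  set a : ℝ := 1 - ‖x‖ ^ 2 with hadef
  set δ : ℝ := a / 4 with hδdef
  have hδ : 0 < δ := by positivity
  set K : ℝ := M * 2 ^ n / n with hKdef
  have hK0 : 0 ≤ K := by positivity
  -- measurability facts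
  have hnorm : Measurable fun y : En n => ‖y - x‖ := (measurable_id.sub measurable_const).norm
  have hdmeas : Measurable fun y : En n => ENNReal.ofReal ((1 - ‖y‖ ^ 2) ^ n)⁻¹ :=
    ENNReal.measurable_ofReal.comp
      (((measurable_const.sub (measurable_norm.pow_const 2)).pow_const n).inv)
  set g1 : En n → ENNReal := fun y =>
    ENNReal.ofReal (K * (a⁻¹ * (‖y - x‖ ^ (n - 1))⁻¹ + (a ^ 2)⁻¹ * (‖y - x‖ ^ (n - 2))⁻¹))
    with hg1def
  set g2 : En n → ENNReal := fun y => ENNReal.ofReal (K * (a * (‖y - x‖ ^ (n + 1))⁻¹)) with hg2def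
  have hg1meas : Measurable g1 :=
    ENNReal.measurable_ofReal.comp
      ((((hnorm.pow_const (n - 1)).inv.const_mul a⁻¹).add
        ((hnorm.pow_const (n - 2)).inv.const_mul (a ^ 2)⁻¹)).const_mul K)
  have hg2meas : Measurable g2 :=
    ENNReal.measurable_ofReal.comp
      (((hnorm.pow_const (n + 1)).inv.const_mul a).const_mul K)
  -- Step 1: pass from tauMeasure to volume
  have step1 : (∫⁻ y in ball (0 : En n) 1,
        ENNReal.ofReal (|dGh n k x y| * ‖ψ y‖) ∂(tauMeasure n))
      = c⁻¹ * ∫⁻ y in ball (0 : En n) 1,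
          (ENNReal.ofReal ((1 - ‖y‖ ^ 2) ^ n)⁻¹
            * ENNReal.ofReal (|dGh n k x y| * ‖ψ y‖)) ∂volume := by
    rw [tauMeasure, nuMeasure, MeasureTheory.restrict_withDensity measurableSet_ball,
      lintegral_withDensity_eq_lintegral_mul_non_measurable _ hdmeas
        (ae_of_all _ fun y => ENNReal.ofReal_lt_top),
      Measure.restrict_smul, lintegral_smul_measure]
    rfl
  -- Step 2: pointwise domination and splitting
  have step2 : (∫⁻ y in ball (0 : En n) 1,
        (ENNReal.ofReal ((1 - ‖y‖ ^ 2) ^ n)⁻¹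
          * ENNReal.ofReal (|dGh n k x y| * ‖ψ y‖)) ∂volume)
      ≤ (∫⁻ y in ball x δ, g1 y ∂volume) + ∫⁻ y in (ball x δ)ᶜ, g2 y ∂volume := by
    have hpt : ∀ y ∈ ball (0 : En n) 1,
        ENNReal.ofReal ((1 - ‖y‖ ^ 2) ^ n)⁻¹ * ENNReal.ofReal (|dGh n k x y| * ‖ψ y‖)
          ≤ (ball x δ).indicator g1 y + ((ball x δ)ᶜ).indicator g2 y := by
      intro y hy
      have hb : (0:ℝ) < 1 - ‖y‖ ^ 2 := by
        have := mem_ball_zero_iff.mp hy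
        nlinarith [norm_nonneg y]
      have h := pointwise_bound hn hM hψ hxmem hy k
      rw [← hadef] at h
      rw [← ENNReal.ofReal_mul (by positivity : (0:ℝ) ≤ ((1 - ‖y‖ ^ 2) ^ n)⁻¹)]
      by_cases hmem : y ∈ ball x δ
      · have hlt : ‖y - x‖ < a / 4 := by rwa [mem_ball, dist_eq_norm] at hmem
        rw [if_pos hlt] at h
        rw [indicator_of_mem hmem, indicator_of_notMem (by simpa using hmem)]
        rw [add_zero, hg1def]
        exact ENNReal.ofReal_le_ofReal (by rw [hKdef]; exact h)
      · have hge : ¬ ‖y - x‖ < a / 4 := by rwa [mem_ball, dist_eq_norm] at hmem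
        rw [if_neg hge] at h
        rw [indicator_of_notMem hmem, indicator_of_mem (by simpa using hmem)]
        rw [zero_add, hg2def]
        exact ENNReal.ofReal_le_ofReal (by rw [hKdef]; exact h)
    calc (∫⁻ y in ball (0 : En n) 1,
          (ENNReal.ofReal ((1 - ‖y‖ ^ 2) ^ n)⁻¹
            * ENNReal.ofReal (|dGh n k x y| * ‖ψ y‖)) ∂volume)
        ≤ ∫⁻ y in ball (0 : En n) 1,
            ((ball x δ).indicator g1 y + ((ball x δ)ᶜ).indicator g2 y) ∂volume :=
          setLIntegral_mono ((hg1meas.indicator measurableSet_ball).add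
            (hg2meas.indicator measurableSet_ball.compl)) hpt
      _ ≤ ∫⁻ y, ((ball x δ).indicator g1 y + ((ball x δ)ᶜ).indicator g2 y) ∂volume :=
          setLIntegral_le_lintegral _ _
      _ = (∫⁻ y, (ball x δ).indicator g1 y ∂volume)
          + ∫⁻ y, ((ball x δ)ᶜ).indicator g2 y ∂volume :=
          lintegral_add_left (hg1meas.indicator measurableSet_ball) _
      _ = (∫⁻ y in ball x δ, g1 y ∂volume) + ∫⁻ y in (ball x δ)ᶜ, g2 y ∂volume := by
          rw [lintegral_indicator measurableSet_ball,
            lintegral_indicator measurableSet_ball.compl]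
  -- Step 3: evaluate the two integrals
  have hE1 : (∫⁻ y in ball x δ, g1 y ∂volume)
      ≤ ENNReal.ofReal (K * a⁻¹ * (2 ^ n * δ ^ 1)) * c
        + ENNReal.ofReal (K * (a ^ 2)⁻¹ * (2 ^ (n - 1) * δ ^ 2)) * c := by
    have hsplit : ∀ y : En n, g1 y
        = ENNReal.ofReal (K * a⁻¹) * ENNReal.ofReal ((‖y - x‖ ^ (n - 1))⁻¹)
          + ENNReal.ofReal (K * (a ^ 2)⁻¹) * ENNReal.ofReal ((‖y - x‖ ^ (n - 2))⁻¹) := by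
      intro y
      rw [hg1def]
      rw [← ENNReal.ofReal_mul (by positivity), ← ENNReal.ofReal_mul (by positivity),
        ← ENNReal.ofReal_add (by positivity) (by positivity)]
      congr 1
      ring
    calc (∫⁻ y in ball x δ, g1 y ∂volume)
        = (∫⁻ y in ball x δ, ENNReal.ofReal (K * a⁻¹)
              * ENNReal.ofReal ((‖y - x‖ ^ (n - 1))⁻¹) ∂volume)
          + ∫⁻ y in ball x δ, ENNReal.ofReal (K * (a ^ 2)⁻¹)
              * ENNReal.ofReal ((‖y - x‖ ^ (n - 2))⁻¹) ∂volume := by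
          simp_rw [hsplit]
          exact lintegral_add_left (((ENNReal.measurable_ofReal.comp
            ((hnorm.pow_const (n - 1)).inv))).const_mul _) _
      _ = ENNReal.ofReal (K * a⁻¹)
            * (∫⁻ y in ball x δ, ENNReal.ofReal ((‖y - x‖ ^ (n - 1))⁻¹) ∂volume)
          + ENNReal.ofReal (K * (a ^ 2)⁻¹)
            * ∫⁻ y in ball x δ, ENNReal.ofReal ((‖y - x‖ ^ (n - 2))⁻¹) ∂volume := by
          rw [lintegral_const_mul' _ _ ENNReal.ofReal_ne_top,
            lintegral_const_mul' _ _ ENNReal.ofReal_ne_top]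
      _ ≤ ENNReal.ofReal (K * a⁻¹) * (ENNReal.ofReal (2 ^ (n - 1 + 1) * δ ^ (n - (n - 1))) * c)
          + ENNReal.ofReal (K * (a ^ 2)⁻¹)
            * (ENNReal.ofReal (2 ^ (n - 2 + 1) * δ ^ (n - (n - 2))) * c) := by
          gcongr
          · exact lint_ball_inv_pow x (by omega) hδ
          · exact lint_ball_inv_pow x (by omega) hδ
      _ = ENNReal.ofReal (K * a⁻¹) * (ENNReal.ofReal (2 ^ n * δ ^ 1) * c)
          + ENNReal.ofReal (K * (a ^ 2)⁻¹) * (ENNReal.ofReal (2 ^ (n - 1) * δ ^ 2) * c) := by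
          rw [show n - 1 + 1 = n from by omega, show n - (n - 1) = 1 from by omega,
            show n - 2 + 1 = n - 1 from by omega, show n - (n - 2) = 2 from by omega]
      _ = ENNReal.ofReal (K * a⁻¹ * (2 ^ n * δ ^ 1)) * c
          + ENNReal.ofReal (K * (a ^ 2)⁻¹ * (2 ^ (n - 1) * δ ^ 2)) * c := by
          rw [ENNReal.ofReal_mul (by positivity : (0:ℝ) ≤ K * a⁻¹),
            ENNReal.ofReal_mul (by positivity : (0:ℝ) ≤ K * (a ^ 2)⁻¹)]
          ring
  have hE2 : (∫⁻ y in (ball x δ)ᶜ, g2 y ∂volume)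
      ≤ ENNReal.ofReal (K * a * (2 ^ (n + 1) * δ⁻¹)) * c := by
    have hsplit : ∀ y : En n, g2 y
        = ENNReal.ofReal (K * a) * ENNReal.ofReal ((‖y - x‖ ^ (n + 1))⁻¹) := by
      intro y
      rw [hg2def, ← ENNReal.ofReal_mul (by positivity)]
      congr 1
      ring
    calc (∫⁻ y in (ball x δ)ᶜ, g2 y ∂volume)
        = ENNReal.ofReal (K * a)
            * ∫⁻ y in (ball x δ)ᶜ, ENNReal.ofReal ((‖y - x‖ ^ (n + 1))⁻¹) ∂volume := by
          simp_rw [hsplit]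
          rw [lintegral_const_mul' _ _ ENNReal.ofReal_ne_top]
      _ ≤ ENNReal.ofReal (K * a) * (ENNReal.ofReal (2 ^ (n + 1) * δ⁻¹) * c) := by
          gcongr
          exact lint_compl_inv_pow hn0 x hδ
      _ = ENNReal.ofReal (K * a * (2 ^ (n + 1) * δ⁻¹)) * c := by
          rw [ENNReal.ofReal_mul (by positivity : (0:ℝ) ≤ K * a)]
          ring
  -- Step 4: real arithmetic for the total constant
  have hreal : K * a⁻¹ * (2 ^ n * δ ^ 1) + K * (a ^ 2)⁻¹ * (2 ^ (n - 1) * δ ^ 2)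
      + K * a * (2 ^ (n + 1) * δ⁻¹) ≤ K * 2 ^ (n + 5) := by
    have e1 : K * a⁻¹ * (2 ^ n * δ ^ 1) = K * 2 ^ n / 4 := by
      rw [hδdef]; field_simp
    have e2 : K * (a ^ 2)⁻¹ * (2 ^ (n - 1) * δ ^ 2) = K * 2 ^ (n - 1) / 16 := by
      rw [hδdef]; field_simp; norm_num
    have e3 : K * a * (2 ^ (n + 1) * δ⁻¹) = K * 2 ^ (n + 1) * 4 := by
      rw [hδdef]; field_simp
    rw [e1, e2, e3]
    have hp1 : (2:ℝ) ^ (n - 1) ≤ 2 ^ n := pow_le_pow_right₀ one_le_two (by omega)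
    have hp2 : (2:ℝ) ^ (n + 1) = 2 * 2 ^ n := by rw [pow_succ]; ring
    have hp3 : (2:ℝ) ^ (n + 5) = 32 * 2 ^ n := by rw [show n + 5 = n + 5 from rfl, pow_add]; ring
    have hpn : (0:ℝ) < 2 ^ n := by positivity
    rw [hp2, hp3]
    nlinarith [mul_le_mul_of_nonneg_left hp1 hK0]
  -- Put everything together
  rw [step1]
  calc c⁻¹ * ∫⁻ y in ball (0 : En n) 1,
        (ENNReal.ofReal ((1 - ‖y‖ ^ 2) ^ n)⁻¹
          * ENNReal.ofReal (|dGh n k x y| * ‖ψ y‖)) ∂volume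
      ≤ c⁻¹ * ((ENNReal.ofReal (K * a⁻¹ * (2 ^ n * δ ^ 1)) * c
          + ENNReal.ofReal (K * (a ^ 2)⁻¹ * (2 ^ (n - 1) * δ ^ 2)) * c)
          + ENNReal.ofReal (K * a * (2 ^ (n + 1) * δ⁻¹)) * c) := by
        gcongr
        exact step2.trans (add_le_add hE1 hE2)
    _ = c⁻¹ * (ENNReal.ofReal (K * a⁻¹ * (2 ^ n * δ ^ 1)
          + K * (a ^ 2)⁻¹ * (2 ^ (n - 1) * δ ^ 2)
          + K * a * (2 ^ (n + 1) * δ⁻¹)) * c) := by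
        rw [ENNReal.ofReal_add (by positivity) (by positivity),
          ENNReal.ofReal_add (by positivity) (by positivity)]
        ring
    _ ≤ c⁻¹ * (ENNReal.ofReal (K * 2 ^ (n + 5)) * c) := by
        gcongr
    _ = ENNReal.ofReal (K * 2 ^ (n + 5)) * (c⁻¹ * c) := by ring
    _ = ENNReal.ofReal (K * 2 ^ (n + 5)) := by
        rw [ENNReal.inv_mul_cancel hc0 hctop, mul_one]
    _ ≤ ENNReal.ofReal (M * 2 ^ n / n * 2 ^ (n + 5)) := by rw [hKdef]
end

section
/- Let M ≥ 0 be a constant and define w₀ on the closed unit disk cl 𝔻 ⊂ ℂ by w₀(re^{iθ}) = Σ_{k=1}^∞ r^k cos(kθ)/k² − (M/4)(1−r²), i.e. w₀(z) = Re( Σ_{k=1}^∞ z^k/k² ) − (M/4)(1−|z|²). Then: (1) w₀ ∈ C²(𝔻,ℝ) ∩ C(cl 𝔻,ℝ) and Δw₀(z) = M for all z ∈ 𝔻 (equivalently Δ_h w₀(z) = M(1−|z|²)²); (2) w₀ is not Lipschitz continuous on 𝔻, i.e. there is no constant L with |w₀(z₁)−w₀(z₂)| ≤ L|z₁−z₂|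 for all z₁, z₂ ∈ 𝔻. -/
open MeasureTheory Metric Set

noncomputable section

/-- `w₀(z) = Re(Σ_{k≥1} z^k/k²) − (M/4)(1−|z|²)`. -/
def w0 (M : ℝ) (z : ℂ) : ℝ :=
  (∑' k : ℕ, (z ^ (k + 1) / ((k : ℂ) + 1) ^ 2)).re - M / 4 * (1 - ‖z‖ ^ 2)

/-- The Laplacian of a real function on `ℂ ≅ ℝ²`:
`Δf(z) = ∂²f/∂x²(z) + ∂²f/∂y²(z)`. -/
def lapC (f : ℂ → ℝ) (z : ℂ) : ℝ :=
  fderiv ℝ (fun w => fderiv ℝ f w 1) z 1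
    + fderiv ℝ (fun w => fderiv ℝ f w Complex.I) z Complex.I

end

noncomputable section Aux
open Complex Filter FormalMultilinearSeries

namespace S19

def c : ℕ → ℂ := fun n => (((n : ℂ)) ^ 2)⁻¹

def p : FormalMultilinearSeries ℂ ℂ ℂ := ofScalars ℂ c

def F : ℂ → ℂ := p.sum

lemma norm_c_le (n : ℕ) : ‖c n‖ ≤ 1 := by
  rcases Nat.eq_zero_or_pos n with h | h
  · simp [c, h]
  · simp only [c, norm_inv, norm_pow, Complex.norm_natCast]
    have h1 : (1:ℝ) ≤ (n:ℝ) ^ 2 := one_le_pow₀ (by exact_mod_cast h)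
    rw [inv_le_one_iff₀]
    right; exact h1

lemma one_le_radius : 1 ≤ p.radius := by
  have := p.le_radius_of_bound 1 (r := 1) (fun n => by
    simp only [p, ofScalars_norm, NNReal.coe_one, one_pow, mul_one]
    exact norm_c_le n)
  simpa using this

lemma hFan : AnalyticOnNhd ℂ F (ball (0:ℂ) 1) := by
  intro z hz
  have h := (p.hasFPowerSeriesOnBall (lt_of_lt_of_le one_pos one_le_radius)).analyticOnNhd
  exact h z (by
    rw [mem_emetric_ball_zero_iff]
    calc (‖z‖₊ : ENNReal) < 1 := by
          simpa [edist_eq_enorm_sub, ENNReal.coe_lt_one_iff, ← NNReal.coe_lt_coe]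
            using mem_ball_zero_iff.mp hz
      _ ≤ p.radius := one_le_radius)

lemma summable_aux {z : ℂ} (hz : ‖z‖ ≤ 1) : Summable (fun n => c n • z ^ n) := by
  apply Summable.of_norm_bounded (g := fun n : ℕ => ((n:ℝ) ^ 2)⁻¹)
  · simpa [one_div] using Real.summable_one_div_nat_pow.mpr one_lt_two
  · intro n
    rw [norm_smul]
    have h1 : ‖z ^ n‖ ≤ 1 := by
      simpa [norm_pow] using pow_le_one₀ (norm_nonneg z) hz
    have h2 : ‖c n‖ = ((n:ℝ)^2)⁻¹ := by simp [c]
    calc ‖c n‖ * ‖z ^ n‖ ≤ ‖c n‖ * 1 := mul_le_mul_of_nonneg_left h1 (norm_nonneg _)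
      _ = ((n:ℝ)^2)⁻¹ := by rw [mul_one, h2]

lemma F_eq {z : ℂ} (hz : ‖z‖ ≤ 1) :
    (∑' k : ℕ, (z ^ (k + 1) / ((k : ℂ) + 1) ^ 2)) = F z := by
  have h1 : F z = ∑' n : ℕ, c n • z ^ n := tsum_congr fun n => ofScalars_apply_eq c z n
  rw [h1, (summable_aux hz).tsum_eq_zero_add]
  simp only [c]
  push_cast
  simp [div_eq_inv_mul, mul_comm]

end S19
end Aux

noncomputable section Aux2
open Complex Filter Metric
namespace S19

def LMre (a : ℂ) : ℂ →L[ℝ] ℝ :=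
  Complex.reCLM.comp (((1 : ℂ →L[ℂ] ℂ).smulRight a).restrictScalars ℝ)

@[simp] lemma LMre_apply (a e : ℂ) : LMre a e = (e * a).re := by
  simp [LMre, smul_eq_mul]

lemma hasFDerivAt_re_comp {f : ℂ → ℂ} {a z : ℂ} (hf : HasDerivAt f a z) :
    HasFDerivAt (fun w => (f w).re) (LMre a) z :=
  Complex.reCLM.hasFDerivAt.comp z ((hf.hasFDerivAt).restrictScalars ℝ)

def Q (w : ℂ) : ℂ →L[ℝ] ℝ := (2*w.re) • Complex.reCLM + (2*w.im) • Complex.imCLM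

@[simp] lemma Q_apply (w e : ℂ) : Q w e = 2*w.re*e.re + 2*w.im*e.im := by
  simp [Q]

lemma hasFDerivAt_normsq (w : ℂ) : HasFDerivAt (fun x : ℂ => ‖x‖^2) (Q w) w := by
  have h1 : HasFDerivAt (fun x : ℂ => x.re*x.re + x.im*x.im)
      ((w.re • Complex.reCLM + w.re • Complex.reCLM) +
        (w.im • Complex.imCLM + w.im • Complex.imCLM)) w :=
    (Complex.reCLM.hasFDerivAt.mul Complex.reCLM.hasFDerivAt).add
      (Complex.imCLM.hasFDerivAt.mul Complex.imCLM.hasFDerivAt)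
  have e1 : (fun x : ℂ => ‖x‖^2) = fun x : ℂ => x.re*x.re + x.im*x.im := by
    funext x
    rw [← Complex.normSq_apply, Complex.normSq_eq_norm_sq]
  have e2 : Q w = (w.re • Complex.reCLM + w.re • Complex.reCLM) +
      (w.im • Complex.imCLM + w.im • Complex.imCLM) := by
    ext1 e
    simp [Q]
    ring
  rw [e1, e2]
  exact h1

end S19
end Aux2

noncomputable section Aux3
open Complex Filter Metric
namespace S19

lemma w0_eqOn (M : ℝ) {w : ℂ} (hw : w ∈ ball (0:ℂ) 1) :
    w0 M w = (F w).re - M / 4 * (1 - ‖w‖ ^ 2) := by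
  rw [w0, F_eq (le_of_lt (mem_ball_zero_iff.mp hw))]

lemma hasFDerivAt_w0 (M : ℝ) {w : ℂ} (hw : w ∈ ball (0:ℂ) 1) :
    HasFDerivAt (w0 M) (LMre (deriv F w) + (M/4) • Q w) w := by
  have hF : HasDerivAt F (deriv F w) w := ((hFan w hw).differentiableAt).hasDerivAt
  have h1 : HasFDerivAt (fun x => (F x).re) (LMre (deriv F w)) w := hasFDerivAt_re_comp hF
  have h2 : HasFDerivAt (fun x : ℂ => M/4*(1-‖x‖^2)) ((M/4) • -Q w) w :=
    ((hasFDerivAt_normsq w).const_sub 1).const_mul (M/4)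
  have h3 := h1.sub h2
  have h4 : LMre (deriv F w) - (M/4) • -Q w = LMre (deriv F w) + (M/4) • Q w := by
    ext1 e; simp; try ring
  rw [h4] at h3
  exact h3.congr_of_eventuallyEq <| Filter.eventuallyEq_of_mem
    (isOpen_ball.mem_nhds hw) fun x hx => w0_eqOn M hx

lemma lap_w0 (M : ℝ) {z : ℂ} (hz : z ∈ ball (0:ℂ) 1) : lapC (w0 M) z = M := by
  have hFan' : AnalyticOnNhd ℂ (deriv F) (ball (0:ℂ) 1) := hFan.deriv
  have h2a : HasDerivAt (deriv F) (deriv (deriv F) z) z :=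
    ((hFan' z hz).differentiableAt).hasDerivAt
  set d2 := deriv (deriv F) z with hd2
  -- direction 1
  have ev1 : (fun w => fderiv ℝ (w0 M) w 1) =ᶠ[nhds z]
      (fun w => (deriv F w).re + M/2*w.re) := by
    refine Filter.eventuallyEq_of_mem (isOpen_ball.mem_nhds hz) fun w hw => ?_
    rw [(hasFDerivAt_w0 M hw).fderiv]
    simp
    try ring
  have evI : (fun w => fderiv ℝ (w0 M) w Complex.I) =ᶠ[nhds z]
      (fun w => (deriv F w * Complex.I).re + M/2*w.im) := by
    refine Filter.eventuallyEq_of_mem (isOpen_ball.mem_nhds hz) fun w hw => ?_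
    rw [(hasFDerivAt_w0 M hw).fderiv]
    simp
    try ring
  have H1 : HasFDerivAt (fun w => (deriv F w).re + M/2*w.re)
      (LMre d2 + (M/2) • Complex.reCLM) z :=
    (hasFDerivAt_re_comp h2a).add (((M/2) • Complex.reCLM).hasFDerivAt)
  have HI : HasFDerivAt (fun w => (deriv F w * Complex.I).re + M/2*w.im)
      (LMre (d2 * Complex.I) + (M/2) • Complex.imCLM) z :=
    (hasFDerivAt_re_comp (h2a.mul_const Complex.I)).add
      (((M/2) • Complex.imCLM).hasFDerivAt)
  rw [lapC, ev1.fderiv_eq, evI.fderiv_eq, H1.fderiv, HI.fderiv]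
  simp [Complex.ext_iff]
  try ring

end S19
end Aux3

noncomputable section Aux4
open Complex Filter Metric Set
namespace S19

lemma contDiffOn_w0 (M : ℝ) : ContDiffOn ℝ 2 (w0 M) (ball (0:ℂ) 1) := by
  have h1 : ContDiffOn ℝ 2 (fun z => (F z).re) (ball (0:ℂ) 1) := by
    have hC : ContDiffOn ℂ 2 F (ball (0:ℂ) 1) :=
      hFan.contDiffOn isOpen_ball.uniqueDiffOn
    exact Complex.reCLM.contDiff.comp_contDiffOn (hC.restrict_scalars ℝ)
  have h2 : ContDiff ℝ 2 (fun z : ℂ => M/4*(1-‖z‖^2)) :=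
    contDiff_const.mul (contDiff_const.sub (contDiff_norm_sq ℝ))
  refine (h1.sub h2.contDiffOn).congr fun z hz => ?_
  rw [w0_eqOn M hz]

lemma continuousOn_w0 (M : ℝ) : ContinuousOn (w0 M) (closedBall (0:ℂ) 1) := by
  have h1 : ContinuousOn (fun z : ℂ => ∑' k : ℕ, (z ^ (k + 1) / ((k : ℂ) + 1) ^ 2))
      (closedBall (0:ℂ) 1) := by
    refine continuousOn_tsum (u := fun k : ℕ => (((k:ℝ)+1) ^ 2)⁻¹)
      (fun k => ((continuous_pow (k+1)).div_const _).continuousOn) ?_ ?_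
    · have : Summable (fun n : ℕ => ((n:ℝ)^2)⁻¹) := by
        simpa [one_div] using Real.summable_one_div_nat_pow.mpr one_lt_two
      have := (summable_nat_add_iff 1).mpr this
      simpa using this
    · intro k z hz
      have hz1 : ‖z‖ ≤ 1 := mem_closedBall_zero_iff.mp hz
      rw [norm_div]
      have hnum : ‖z ^ (k+1)‖ ≤ 1 := by
        simpa [norm_pow] using pow_le_one₀ (norm_nonneg z) hz1
      have hden : ‖((k:ℂ)+1)^2‖ = ((k:ℝ)+1)^2 := by
        have e : ((k:ℂ)+1) = ((k+1:ℕ):ℂ) := by push_cast; ring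
        rw [e, norm_pow, Complex.norm_natCast]
        push_cast; ring
      rw [hden, div_le_iff₀ (by positivity), inv_mul_cancel₀ (by positivity)]
      exact hnum
  exact (Complex.continuous_re.comp_continuousOn h1).sub
    ((continuous_const.mul (continuous_const.sub (contDiff_norm_sq ℝ (n := 1)).continuous)).continuousOn)

end S19
end Aux4

noncomputable section Aux5
open Complex Filter Metric Set Finset
namespace S19

lemma summable_shift : Summable (fun k : ℕ => (((k:ℝ)+1)^2)⁻¹) := by
  have : Summable (fun n : ℕ => ((n:ℝ)^2)⁻¹) := by
    simpa [one_div] using Real.summable_one_div_nat_pow.mpr one_lt_two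
  have := (summable_nat_add_iff 1).mpr this
  simpa using this

lemma summable_real {t : ℝ} (ht : |t| ≤ 1) :
    Summable (fun k : ℕ => t^(k+1)/((k:ℝ)+1)^2) := by
  apply Summable.of_norm_bounded (g := fun k : ℕ => (((k:ℝ)+1)^2)⁻¹) summable_shift
  intro k
  rw [Real.norm_eq_abs, abs_div, _root_.abs_pow, _root_.abs_pow]
  have h1 : |t|^(k+1) ≤ 1 := pow_le_one₀ (abs_nonneg t) ht
  have h2 : |(k:ℝ)+1|^2 = ((k:ℝ)+1)^2 := by
    rw [_root_.abs_of_nonneg (by positivity : (0:ℝ) ≤ (k:ℝ)+1)]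
  rw [h2, div_le_iff₀ (by positivity), inv_mul_cancel₀ (by positivity)]
  exact h1

lemma w0_real (M : ℝ) {t : ℝ} (ht : |t| ≤ 1) :
    w0 M (t:ℂ) = (∑' k:ℕ, t^(k+1)/((k:ℝ)+1)^2) - M/4*(1-t^2) := by
  rw [w0]
  congr 2
  · have h : ∀ k:ℕ, ((t:ℂ))^(k+1)/((k:ℂ)+1)^2 = ((t^(k+1)/((k:ℝ)+1)^2 : ℝ) : ℂ) := by
      intro k; push_cast; ring
    rw [tsum_congr h, ← Complex.ofReal_tsum, Complex.ofReal_re]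
  · rw [Complex.norm_real, Real.norm_eq_abs, _root_.sq_abs]

lemma pow_gap {r r' : ℝ} (h0 : 0 ≤ r) (h : r ≤ r') :
    ∀ n : ℕ, ((n:ℝ)+1) * r^n * (r'-r) ≤ r'^(n+1) - r^(n+1) := by
  intro n
  induction n with
  | zero => simp
  | succ n ih =>
    have hr' : 0 ≤ r' := h0.trans h
    have h1 : r' * (((n:ℝ)+1)*r^n*(r'-r)) ≤ r' * (r'^(n+1) - r^(n+1)) :=
      mul_le_mul_of_nonneg_left ih hr'
    have h2 : r * (r^n*(r'-r)) ≤ r' * (r^n*(r'-r)) :=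
      mul_le_mul_of_nonneg_right h (mul_nonneg (pow_nonneg h0 n) (by linarith))
    have h4 := mul_le_mul_of_nonneg_left h2 (show (0:ℝ) ≤ (n:ℝ)+1 by positivity)
    rw [pow_succ r n] at h1 ih ⊢
    rw [pow_succ r' (n+1), pow_succ r (n+1), pow_succ r n] at *
    push_cast
    nlinarith [h1, h4]

end S19
end Aux5

noncomputable section Aux6
open Complex Filter Metric Set Finset
namespace S19

lemma not_lipschitz (M : ℝ) (hM : 0 ≤ M) :
    ¬ ∃ L : ℝ, ∀ z₁ ∈ ball (0 : ℂ) 1, ∀ z₂ ∈ ball (0 : ℂ) 1,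
        |w0 M z₁ - w0 M z₂| ≤ L * ‖z₁ - z₂‖ := by
  rintro ⟨L, hL⟩
  obtain ⟨N, hN1, hNH⟩ : ∃ N : ℕ, 1 ≤ N ∧
      4*(|L|+1) < ∑ i ∈ Finset.range N, (1:ℝ)/(i+1) := by
    have h2 := ((Real.tendsto_sum_range_one_div_nat_succ_atTop.eventually_gt_atTop
      (4*(|L|+1))).and (eventually_ge_atTop 1)).exists
    obtain ⟨N, hN⟩ := h2
    exact ⟨N, hN.2, hN.1⟩
  have hN0 : (0:ℝ) < N := by exact_mod_cast hN1
  have hN1r : (1:ℝ) ≤ N := by exact_mod_cast hN1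
  set H : ℝ := ∑ i ∈ Finset.range N, (1:ℝ)/(i+1) with hH_def
  have hHnn : 0 ≤ H := Finset.sum_nonneg fun i _ => by positivity
  set r : ℝ := 1 - 1/(2*(N:ℝ)) with hr_def
  set r' : ℝ := 1 - 1/(4*(N:ℝ)) with hr'_def
  have h2N : (0:ℝ) < 2*N := by linarith
  have h4N : (0:ℝ) < 4*N := by linarith
  have hr0 : 0 ≤ r := by
    rw [hr_def]
    have : 1/(2*(N:ℝ)) ≤ 1 := by rw [div_le_one h2N]; linarith
    linarith
  have hrr' : r ≤ r' := by
    rw [hr_def, hr'_def]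
    have : 1/(4*(N:ℝ)) ≤ 1/(2*(N:ℝ)) := one_div_le_one_div_of_le h2N (by linarith)
    linarith
  have hr'1 : r' < 1 := by
    rw [hr'_def]
    have : 0 < 1/(4*(N:ℝ)) := by positivity
    linarith
  have hgap : 0 < r' - r := by
    rw [hr_def, hr'_def]
    have : 1/(4*(N:ℝ)) < 1/(2*(N:ℝ)) := one_div_lt_one_div_of_lt h2N (by linarith)
    linarith
  have hr1 : r ≤ 1 := by
    rw [hr_def]
    have : 0 < 1/(2*(N:ℝ)) := by positivity
    linarith
  have hr'0 : 0 ≤ r' := hr0.trans hrr'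
  have hmem1 : (r' : ℂ) ∈ ball (0:ℂ) 1 := by
    rw [mem_ball_zero_iff, Complex.norm_real, Real.norm_eq_abs, _root_.abs_of_nonneg hr'0]
    exact hr'1
  have hmem2 : (r : ℂ) ∈ ball (0:ℂ) 1 := by
    rw [mem_ball_zero_iff, Complex.norm_real, Real.norm_eq_abs, _root_.abs_of_nonneg hr0]
    exact lt_of_le_of_lt hrr' hr'1
  have key := hL _ hmem1 _ hmem2
  have hnorm : ‖(r' : ℂ) - (r : ℂ)‖ = r' - r := by
    rw [← Complex.ofReal_sub, Complex.norm_real, Real.norm_eq_abs,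
      _root_.abs_of_nonneg hgap.le]
  rw [hnorm] at key
  have habs_r : |r| ≤ 1 := by rw [_root_.abs_of_nonneg hr0]; exact hr1
  have habs_r' : |r'| ≤ 1 := by rw [_root_.abs_of_nonneg hr'0]; exact hr'1.le
  rw [w0_real M habs_r', w0_real M habs_r] at key
  have hsum_r := summable_real habs_r
  have hsum_r' := summable_real habs_r'
  -- half bound on r^N
  have hhalf : (1:ℝ)/2 ≤ r^N := by
    have hb : (-2:ℝ) ≤ -(1/(2*(N:ℝ))) := by
      have : 1/(2*(N:ℝ)) ≤ 1 := by rw [div_le_one h2N]; linarith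
      linarith
    have h := one_add_mul_le_pow hb N
    have e1 : (1:ℝ) + -(1/(2*(N:ℝ))) = r := by rw [hr_def]; ring
    have e2 : (1:ℝ) + (N:ℝ) * -(1/(2*(N:ℝ))) = 1/2 := by
      field_simp
      ring
    rw [e1, e2] at h
    exact h
  -- per-term lower bound
  have hterm : ∀ i ∈ Finset.range N, r^N * (r'-r) * (1/((i:ℝ)+1)) ≤
      r'^(i+1)/((i:ℝ)+1)^2 - r^(i+1)/((i:ℝ)+1)^2 := by
    intro i hi
    have hiN : i ≤ N := (Finset.mem_range.mp hi).le
    have hpow : r^N ≤ r^i := pow_le_pow_of_le_one hr0 hr1 hiN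
    have h5 : ((i:ℝ)+1) * r^N * (r'-r) ≤ r'^(i+1) - r^(i+1) := by
      refine le_trans ?_ (pow_gap hr0 hrr' i)
      have : ((i:ℝ)+1) * r^N ≤ ((i:ℝ)+1) * r^i :=
        mul_le_mul_of_nonneg_left hpow (by positivity)
      exact mul_le_mul_of_nonneg_right this hgap.le
    have hip : (0:ℝ) < ((i:ℝ)+1)^2 := by positivity
    rw [div_sub_div_same]
    calc r^N * (r'-r) * (1/((i:ℝ)+1))
        = (((i:ℝ)+1) * r^N * (r'-r)) / ((i:ℝ)+1)^2 := by field_simp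
      _ ≤ (r'^(i+1) - r^(i+1)) / ((i:ℝ)+1)^2 := by gcongr
  -- sum up
  have hsumN : r^N * (r'-r) * H ≤
      ∑ i ∈ Finset.range N, (r'^(i+1)/((i:ℝ)+1)^2 - r^(i+1)/((i:ℝ)+1)^2) := by
    have := Finset.sum_le_sum hterm
    calc r^N * (r'-r) * H = ∑ i ∈ Finset.range N, r^N * (r'-r) * (1/((i:ℝ)+1)) := by
          rw [hH_def, Finset.mul_sum]
      _ ≤ _ := this
  have hdiff_nonneg : ∀ i : ℕ, 0 ≤ r'^(i+1)/((i:ℝ)+1)^2 - r^(i+1)/((i:ℝ)+1)^2 := by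
    intro i
    have h1 : r^(i+1) ≤ r'^(i+1) := pow_le_pow_left₀ hr0 hrr' (i+1)
    have hip : (0:ℝ) < ((i:ℝ)+1)^2 := by positivity
    have : r^(i+1)/((i:ℝ)+1)^2 ≤ r'^(i+1)/((i:ℝ)+1)^2 := by gcongr
    linarith
  have htsum : ∑ i ∈ Finset.range N, (r'^(i+1)/((i:ℝ)+1)^2 - r^(i+1)/((i:ℝ)+1)^2) ≤
      (∑' k:ℕ, r'^(k+1)/((k:ℝ)+1)^2) - (∑' k:ℕ, r^(k+1)/((k:ℝ)+1)^2) := by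
    rw [← hsum_r'.tsum_sub hsum_r]
    exact Summable.sum_le_tsum _ (fun i _ => hdiff_nonneg i) (hsum_r'.sub hsum_r)
  -- combine with the Lipschitz bound
  have hM2 : 0 ≤ M/4*(r'^2 - r^2) := by
    have : r^2 ≤ r'^2 := pow_le_pow_left₀ hr0 hrr' 2
    have : 0 ≤ r'^2 - r^2 := by linarith
    positivity
  have hw0diff : (∑' k:ℕ, r'^(k+1)/((k:ℝ)+1)^2) - (∑' k:ℕ, r^(k+1)/((k:ℝ)+1)^2)
      ≤ L * (r'-r) := by
    have h1 : (∑' k:ℕ, r'^(k+1)/((k:ℝ)+1)^2) - M/4*(1-r'^2)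
        - ((∑' k:ℕ, r^(k+1)/((k:ℝ)+1)^2) - M/4*(1-r^2))
        = ((∑' k:ℕ, r'^(k+1)/((k:ℝ)+1)^2) - (∑' k:ℕ, r^(k+1)/((k:ℝ)+1)^2))
          + M/4*(r'^2 - r^2) := by ring
    have h2 := le_trans (le_abs_self _) key
    rw [h1] at h2
    linarith
  -- final contradiction
  have hchain : (r'-r) * (1/2 * H) ≤ L * (r'-r) := by
    have hA : (r'-r) * (1/2 * H) ≤ r^N * (r'-r) * H := by
      have := mul_le_mul_of_nonneg_right hhalf (mul_nonneg hgap.le hHnn)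
      calc (r'-r) * (1/2 * H) = 1/2 * ((r'-r) * H) := by ring
        _ ≤ r^N * ((r'-r) * H) := this
        _ = r^N * (r'-r) * H := by ring
    linarith [hsumN, htsum, hw0diff]
  have hfin : 1/2 * H ≤ L := by
    have := le_of_mul_le_mul_right
      (by linarith [hchain] : (1/2 * H) * (r'-r) ≤ L * (r'-r)) hgap
    exact this
  have : L ≤ |L| := le_abs_self L
  linarith

end S19
end Aux6

/-- `w₀ ∈ C²(𝔻,ℝ) ∩ C(cl 𝔻,ℝ)` with `Δw₀ = M` (equivalently
`Δ_h w₀(z) = M(1−|z|²)²`), but `w₀` is not Lipschitz continuous on `𝔻`. -/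
theorem stmt_19 (M : ℝ) (hM : 0 ≤ M) :
    (ContDiffOn ℝ 2 (w0 M) (ball (0 : ℂ) 1) ∧
      ContinuousOn (w0 M) (closedBall (0 : ℂ) 1) ∧
      (∀ z ∈ ball (0 : ℂ) 1, lapC (w0 M) z = M) ∧
      (∀ z ∈ ball (0 : ℂ) 1,
        (1 - ‖z‖ ^ 2) ^ 2 * lapC (w0 M) z = M * (1 - ‖z‖ ^ 2) ^ 2)) ∧
    ¬ ∃ L : ℝ, ∀ z₁ ∈ ball (0 : ℂ) 1, ∀ z₂ ∈ ball (0 : ℂ) 1,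
        |w0 M z₁ - w0 M z₂| ≤ L * ‖z₁ - z₂‖ := by
  refine ⟨⟨S19.contDiffOn_w0 M, S19.continuousOn_w0 M, fun z hz => S19.lap_w0 M hz,
    fun z hz => by rw [S19.lap_w0 M hz]; ring⟩, S19.not_lipschitz M hM⟩
end
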